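/- arXiv:0908.3330 — 3 statements merged into one kernel-verified Lean document; each statement's English description precedes it below -/
import Mathlib

section
/- Fix k and S ⊆ {1,…,k}, and let f_j(a_1,…,a_k) be the number of (a_1,…,a_k,S)-permutations with no fixed points in blocks A_1,…,A_j. Then for 0 ≤ j < k, f_j(c_1,…,c_k) = Σ_{h=0}^{m_{j+1}} f_{j+1}(c_1,…,c_{j+1}−h,…,c_k), where m_i = 1 if i ∈ S and m_i = c_i if i ∉ S. -/
/-- Apply a permutation of `Fin n` to a natural number (0-based indexing);
indices `≥ n` are left fixed. -/
def appl {n : ℕ} (π : Equiv.Perm (Fin n)) (j : ℕ) : ℕ :=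
  if h : j < n then ((π ⟨j, h⟩ : Fin n) : ℕ) else j

/-- The starting index (0-based) of the `i`-th consecutive block when
`{0,…,n-1}` is partitioned into blocks of sizes `a 0, …, a (k-1)`. -/
def blockStart {k : ℕ} (a : Fin k → ℕ) (i : Fin k) : ℕ := ∑ t ∈ Finset.Iio i, a t

/-- `x` lies in the `i`-th block. -/
def inBlock {k : ℕ} (a : Fin k → ℕ) (i : Fin k) (x : ℕ) : Prop :=
  blockStart a i ≤ x ∧ x < blockStart a i + a i

instance {k : ℕ} (a : Fin k → ℕ) (i : Fin k) : DecidablePred (inBlock a i) := fun x =>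
  inferInstanceAs (Decidable (blockStart a i ≤ x ∧ x < blockStart a i + a i))

/-- An `(a₁,…,a_k,S)`-permutation: a permutation of `{0,…,n-1}` (where `n = ∑ aᵢ`)
that is strictly decreasing on each block `Aᵢ` with `i ∈ S` and strictly
increasing on each block `Aᵢ` with `i ∉ S`. -/
def IsASPerm {k : ℕ} (a : Fin k → ℕ) (S : Finset (Fin k))
    (π : Equiv.Perm (Fin (∑ t, a t))) : Prop :=
  ∀ i : Fin k, ∀ j : ℕ, blockStart a i ≤ j → j + 1 < blockStart a i + a i →
    if i ∈ S then appl π (j + 1) < appl π j else appl π j < appl π (j + 1)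

/-- `f_j(c)`: the number of `(c,S)`-permutations with no fixed points in the
first `j` blocks. -/
noncomputable def fcount (k : ℕ) (S : Finset (Fin k)) (j : ℕ) (c : Fin k → ℕ) : ℕ :=
  Nat.card {π : Equiv.Perm (Fin (∑ t, c t)) //
    IsASPerm c S π ∧ ∀ i : Fin k, (i : ℕ) < j → ∀ x : ℕ, inBlock c i x → appl π x ≠ x}

/-- `f_j` extended to integer block sizes: zero if any block size is negative. -/
noncomputable def fcountZ (k : ℕ) (S : Finset (Fin k)) (j : ℕ) (c : Fin k → ℤ) : ℕ :=
  if ∀ i, 0 ≤ c i then fcount k S j (fun i => (c i).toNat) else 0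

/-! ### Basic `appl` lemmas -/

section Appl

variable {n : ℕ} (π : Equiv.Perm (Fin n))

theorem appl_lt {x : ℕ} (hx : x < n) : appl π x < n := by
  rw [appl, dif_pos hx]; exact (π ⟨x, hx⟩).2

theorem appl_of_ge {x : ℕ} (hx : n ≤ x) : appl π x = x := by
  rw [appl, dif_neg (by omega)]

theorem appl_lt_iff {x : ℕ} : appl π x < n ↔ x < n := by
  constructor
  · intro h; by_contra hx; rw [appl_of_ge π (by omega)] at h; omega
  · exact appl_lt π

theorem appl_symm_appl (x : ℕ) : appl π.symm (appl π x) = x := by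
  by_cases hx : x < n
  · have h1 : appl π x = ((π ⟨x, hx⟩ : Fin n) : ℕ) := by rw [appl, dif_pos hx]
    have h2 : appl π x < n := by rw [h1]; exact (π ⟨x, hx⟩).2
    rw [appl, dif_pos h2]
    have : (⟨appl π x, h2⟩ : Fin n) = π ⟨x, hx⟩ := by ext; simpa using h1
    rw [this]; simp
  · rw [appl_of_ge π (by omega), appl_of_ge _ (by omega)]

theorem appl_injective : Function.Injective (appl π) := by
  intro a b hab
  have := appl_symm_appl π a
  rw [hab, appl_symm_appl] at this; omega

theorem appl_symm_appl' (x : ℕ) : appl π (appl π.symm x) = x := by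
  have := appl_symm_appl π.symm x
  simpa using this

theorem appl_ne_iff {x : ℕ} : appl π x ≠ x ↔ appl π.symm x ≠ x := by
  constructor
  · intro h hc
    apply h
    conv_lhs => rw [← hc]
    rw [appl_symm_appl']
  · intro h hc
    have := appl_symm_appl π x
    rw [hc] at this
    exact h this

theorem perm_ext_appl {π₁ π₂ : Equiv.Perm (Fin n)} (h : ∀ x, appl π₁ x = appl π₂ x) :
    π₁ = π₂ := by
  ext x
  have := h x.1
  rw [appl, dif_pos x.2, appl, dif_pos x.2] at this
  simpa using this

theorem appl_permCongr {m : ℕ} (e : n = m) (x : ℕ) :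
    appl ((finCongr e).permCongr π) x = appl π x := by
  subst e
  by_cases hx : x < n
  · rw [appl, dif_pos hx, appl, dif_pos hx]; simp [Equiv.permCongr]
  · rw [appl_of_ge _ (by omega), appl_of_ge _ (by omega)]

end Appl

/-! ### Block structure lemmas -/

section Blocks

variable {k : ℕ}

theorem blockStart_add_le (c : Fin k → ℕ) (i : Fin k) :
    blockStart c i + c i ≤ ∑ t, c t := by
  have h1 : insert i (Finset.Iio i) ⊆ Finset.univ := Finset.subset_univ _
  have h2 : ∑ t ∈ insert i (Finset.Iio i), c t = c i + blockStart c i :=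
    Finset.sum_insert (by simp)
  have := Finset.sum_le_sum_of_subset h1 (f := c)
  rw [h2] at this
  omega

theorem blockStart_mono_le {c : Fin k → ℕ} {i i' : Fin k} (h : i < i') :
    blockStart c i + c i ≤ blockStart c i' := by
  have h1 : insert i (Finset.Iio i) ⊆ Finset.Iio i' := by
    intro t ht
    simp only [Finset.mem_insert, Finset.mem_Iio] at ht ⊢
    rcases ht with rfl | ht
    · exact h
    · exact lt_trans ht h
  have h2 : ∑ t ∈ insert i (Finset.Iio i), c t = c i + blockStart c i :=
    Finset.sum_insert (by simp)
  have := Finset.sum_le_sum_of_subset h1 (f := c)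
  rw [h2] at this
  unfold blockStart at this ⊢
  omega

theorem sum_update_add {c : Fin k → ℕ} {jf : Fin k} {h : ℕ} (hh : h ≤ c jf) :
    (∑ t, Function.update c jf (c jf - h) t) + h = ∑ t, c t := by
  classical
  rw [Finset.sum_update_of_mem (Finset.mem_univ jf)]
  have : ∑ t, c t = c jf + ∑ x ∈ Finset.univ \ {jf}, c x := by
    rw [Finset.sum_eq_add_sum_sdiff_singleton_of_mem (Finset.mem_univ jf)]
  omega

theorem blockStart_update_of_le {c : Fin k → ℕ} {jf : Fin k} {a : ℕ} {i : Fin k}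
    (hij : i ≤ jf) : blockStart (Function.update c jf a) i = blockStart c i := by
  classical
  unfold blockStart
  apply Finset.sum_congr rfl
  intro t ht
  simp only [Finset.mem_Iio] at ht
  rw [Function.update_of_ne (by intro he; subst he; exact absurd hij (not_le.2 ht))]

theorem blockStart_update_of_gt {c : Fin k → ℕ} {jf : Fin k} {h : ℕ} {i : Fin k}
    (hh : h ≤ c jf) (hij : jf < i) :
    blockStart (Function.update c jf (c jf - h)) i + h = blockStart c i := by
  classical
  unfold blockStart
  rw [Finset.sum_update_of_mem (by simpa using hij)]
  have : ∑ t ∈ Finset.Iio i, c t = c jf + ∑ x ∈ Finset.Iio i \ {jf}, c x := by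
    rw [Finset.sum_eq_add_sum_sdiff_singleton_of_mem (by simpa using hij)]
  omega

end Blocks

/-! ### Monotone-on-blocks: from adjacent steps to full comparisons -/

section Mono

theorem chain_rel {f : ℕ → ℕ} {a b : ℕ} (R : ℕ → ℕ → Prop) (htrans : Transitive R)
    (hstep : ∀ z, a ≤ z → z + 1 < b → R (f z) (f (z + 1))) :
    ∀ x y, a ≤ x → y < b → x < y → R (f x) (f y) := by
  intro x y
  induction y with
  | zero => omega
  | succ y ih =>
    intro hx hy hxy
    rcases Nat.lt_or_ge x y with h | h
    · exact htrans (ih hx (by omega) h) (hstep y (by omega) (by omega))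
    · have : x = y := by omega
      subst this
      exact hstep x hx (by omega)

/-- `BM c S π`: full strict monotonicity on blocks. -/
def BM {k : ℕ} (c : Fin k → ℕ) (S : Finset (Fin k)) (f : ℕ → ℕ) : Prop :=
  ∀ i : Fin k, ∀ x y : ℕ, blockStart c i ≤ x → y < blockStart c i + c i → x < y →
    if i ∈ S then f y < f x else f x < f y

theorem isASPerm_iff_BM {k : ℕ} {c : Fin k → ℕ} {S : Finset (Fin k)}
    {π : Equiv.Perm (Fin (∑ t, c t))} :
    IsASPerm c S π ↔ BM c S (appl π) := by
  constructor
  · intro hAS i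
    by_cases hi : i ∈ S
    · have := chain_rel (f := appl π) (a := blockStart c i) (b := blockStart c i + c i)
        (fun a b => b < a) (fun a b cc h1 h2 => lt_trans h2 h1)
        (fun z hz hz1 => by have := hAS i z hz hz1; rwa [if_pos hi] at this)
      intro x y hx hy hxy
      rw [if_pos hi]
      exact this x y hx hy hxy
    · have := chain_rel (f := appl π) (a := blockStart c i) (b := blockStart c i + c i)
        (fun a b => a < b) (fun a b cc h1 h2 => lt_trans h1 h2)
        (fun z hz hz1 => by have := hAS i z hz hz1; rwa [if_neg hi] at this)
      intro x y hx hy hxy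
      rw [if_neg hi]
      exact this x y hx hy hxy
  · intro hbm i z hz hz1
    exact hbm i z (z + 1) hz hz1 (by omega)

/-- On an increasing stretch, values grow at least as fast as indices. -/
theorem gap_inc {f : ℕ → ℕ} {a b : ℕ}
    (h : ∀ x y, a ≤ x → y < b → x < y → f x < f y) :
    ∀ x y, a ≤ x → y < b → x ≤ y → f x + (y - x) ≤ f y := by
  intro x y
  induction y with
  | zero => intro _ _ hxy; interval_cases x; omega
  | succ y ih =>
    intro hx hy hxy
    rcases Nat.lt_or_ge x (y + 1) with h1 | h1
    · rcases Nat.eq_or_lt_of_le (Nat.le_of_lt_succ h1) with rfl | h2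
      · have := h x (x + 1) hx hy (by omega)
        omega
      · have hy' := ih hx (by omega) (by omega)
        have := h y (y + 1) (by omega) hy (by omega)
        omega
    · have : x = y + 1 := by omega
      subst this; omega

theorem gap_dec {f : ℕ → ℕ} {a b : ℕ}
    (h : ∀ x y, a ≤ x → y < b → x < y → f y < f x) :
    ∀ x y, a ≤ x → y < b → x ≤ y → f y + (y - x) ≤ f x := by
  intro x y
  induction y with
  | zero => intro _ _ hxy; interval_cases x; omega
  | succ y ih =>
    intro hx hy hxy
    rcases Nat.lt_or_ge x (y + 1) with h1 | h1
    · rcases Nat.eq_or_lt_of_le (Nat.le_of_lt_succ h1) with rfl | h2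
      · have := h x (x + 1) hx hy (by omega)
        omega
      · have hy' := ih hx (by omega) (by omega)
        have := h y (y + 1) (by omega) hy (by omega)
        omega
    · have : x = y + 1 := by omega
      subst this; omega

end Mono

/-! ### Trichotomy structure of a monotone block -/

section Tri

/-- Direction-dependent "before the fixed zone" predicate. -/
def Pdir (dec : Bool) (f : ℕ → ℕ) (x : ℕ) : Prop := if dec then x < f x else f x < x

instance (dec : Bool) (f : ℕ → ℕ) (x : ℕ) : Decidable (Pdir dec f x) := by
  unfold Pdir; infer_instance

/-- Number of fixed points of `f` in `[s, s+cj)`. -/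
def fixCnt (s cj : ℕ) (f : ℕ → ℕ) : ℕ :=
  ((Finset.range cj).filter (fun t => f (s + t) = s + t)).card

/-- The split point of the block `[s, s+cj)`. -/
def splitPt (dec : Bool) (s cj : ℕ) (f : ℕ → ℕ) : ℕ :=
  s + ((Finset.range cj).filter (fun t => Pdir dec f (s + t))).card

theorem dc_eq_range (D : Finset ℕ) (hD : ∀ a b : ℕ, a ≤ b → b ∈ D → a ∈ D) :
    D = Finset.range D.card := by
  ext t
  constructor
  · intro ht
    have hsub : Finset.range (t + 1) ⊆ D := by
      intro a ha
      exact hD a t (by simpa using Nat.lt_succ_iff.mp (Finset.mem_range.mp ha)) ht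
    have := Finset.card_le_card hsub
    simp only [Finset.card_range] at this
    simp only [Finset.mem_range]
    omega
  · intro ht
    by_contra hc
    have hsub : D ⊆ Finset.range t := by
      intro b hb
      simp only [Finset.mem_range]
      by_contra hbt
      exact hc (hD t b (by omega) hb)
    have := Finset.card_le_card hsub
    simp only [Finset.card_range] at this
    simp only [Finset.mem_range] at ht
    omega

theorem tri {s cj : ℕ} {f : ℕ → ℕ} (dec : Bool)
    (hmono : ∀ x y : ℕ, s ≤ x → y < s + cj → x < y →
      if dec then f y < f x else f x < f y) :
    splitPt dec s cj f + fixCnt s cj f ≤ s + cj ∧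
    ∀ x : ℕ, s ≤ x → x < s + cj →
      ((x < splitPt dec s cj f → Pdir dec f x) ∧
       (splitPt dec s cj f ≤ x → x < splitPt dec s cj f + fixCnt s cj f → f x = x) ∧
       (splitPt dec s cj f + fixCnt s cj f ≤ x → Pdir (!dec) f x)) := by
  classical
  set DP := (Finset.range cj).filter (fun t => Pdir dec f (s + t)) with hDP
  set DQ := (Finset.range cj).filter (fun t => f (s + t) = s + t) with hDQ
  set DPQ := (Finset.range cj).filter (fun t => Pdir dec f (s + t) ∨ f (s + t) = s + t)
    with hDPQ
  have hPdc : ∀ a b : ℕ, a ≤ b → b ∈ DP → a ∈ DP := by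
    intro a b hab hb
    rw [hDP, Finset.mem_filter, Finset.mem_range] at hb ⊢
    refine ⟨by omega, ?_⟩
    rcases Nat.eq_or_lt_of_le hab with rfl | hab'
    · exact hb.2
    cases dec with
    | false =>
      simp [Pdir] at hb ⊢
      have := gap_inc (a := s) (b := s + cj)
        (fun x y hx hy hxy => by simpa using hmono x y hx hy hxy)
        (s + a) (s + b) (by omega) (by omega) (by omega)
      omega
    | true =>
      simp [Pdir] at hb ⊢
      have := gap_dec (a := s) (b := s + cj)
        (fun x y hx hy hxy => by simpa using hmono x y hx hy hxy)
        (s + a) (s + b) (by omega) (by omega) (by omega)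
      omega
  have hPQdc : ∀ a b : ℕ, a ≤ b → b ∈ DPQ → a ∈ DPQ := by
    intro a b hab hb
    rw [hDPQ, Finset.mem_filter, Finset.mem_range] at hb ⊢
    refine ⟨by omega, ?_⟩
    rcases Nat.eq_or_lt_of_le hab with rfl | hab'
    · exact hb.2
    cases dec with
    | false =>
      simp [Pdir] at hb ⊢
      have := gap_inc (a := s) (b := s + cj)
        (fun x y hx hy hxy => by simpa using hmono x y hx hy hxy)
        (s + a) (s + b) (by omega) (by omega) (by omega)
      omega
    | true =>
      simp [Pdir] at hb ⊢
      have := gap_dec (a := s) (b := s + cj)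
        (fun x y hx hy hxy => by simpa using hmono x y hx hy hxy)
        (s + a) (s + b) (by omega) (by omega) (by omega)
      omega
  have hPQex : ∀ t : ℕ, ¬ (Pdir dec f (s + t) ∧ f (s + t) = s + t) := by
    intro t ht
    obtain ⟨h1, h2⟩ := ht
    cases dec <;> simp [Pdir] at h1 <;> omega
  have hunion : DPQ = DP ∪ DQ := by
    rw [hDP, hDQ, hDPQ, Finset.filter_or]
  have hdisj : Disjoint DP DQ := by
    rw [Finset.disjoint_left]
    intro t ht ht'
    rw [hDP, Finset.mem_filter] at ht
    rw [hDQ, Finset.mem_filter] at ht'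
    exact hPQex t ⟨ht.2, ht'.2⟩
  have hcard : DPQ.card = DP.card + DQ.card := by
    rw [hunion, Finset.card_union_of_disjoint hdisj]
  have hDPr : DP = Finset.range DP.card := dc_eq_range DP hPdc
  have hDPQr : DPQ = Finset.range (DP.card + DQ.card) := by
    rw [← hcard]; exact dc_eq_range DPQ hPQdc
  have hsub : DPQ ⊆ Finset.range cj := Finset.filter_subset _ _
  have hcard_le : DP.card + DQ.card ≤ cj := by
    have := Finset.card_le_card hsub
    rw [hcard] at this; simpa using this
  have hsplit : splitPt dec s cj f = s + DP.card := rfl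
  have hfix : fixCnt s cj f = DQ.card := rfl
  constructor
  · rw [hsplit, hfix]; omega
  intro x hx hx'
  set t0 := x - s with ht0
  have hxt : x = s + t0 := by omega
  have ht0cj : t0 < cj := by omega
  have hmemP : t0 ∈ DP ↔ t0 < DP.card := by
    rw [hDPr]; simp [Finset.mem_range]
  have hmemPQ : t0 ∈ DPQ ↔ t0 < DP.card + DQ.card := by
    rw [hDPQr]; simp [Finset.mem_range]
  rw [hsplit, hfix]
  refine ⟨?_, ?_, ?_⟩
  · intro hxu
    have : t0 ∈ DP := hmemP.mpr (by omega)
    rw [hDP, Finset.mem_filter] at this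
    rw [hxt]; exact this.2
  · intro h1 h2
    have hin : t0 ∈ DPQ := hmemPQ.mpr (by omega)
    have hnotP : t0 ∉ DP := fun hc => by rw [hmemP] at hc; omega
    rw [hDPQ, Finset.mem_filter] at hin
    rw [hDP, Finset.mem_filter] at hnotP
    rcases hin.2 with hP | hQ
    · exact absurd ⟨hin.1, hP⟩ hnotP
    · rw [hxt]; exact hQ
  · intro h1
    have hnot : t0 ∉ DPQ := fun hc => by rw [hmemPQ] at hc; omega
    rw [hDPQ, Finset.mem_filter, Finset.mem_range] at hnot
    push_neg at hnot
    obtain ⟨hnP, hnQ⟩ := hnot ht0cj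
    rw [hxt]
    cases dec with
    | false =>
      simp [Pdir] at hnP ⊢
      omega
    | true =>
      simp [Pdir] at hnP ⊢
      omega

theorem fixCnt_le_one {s cj : ℕ} {f : ℕ → ℕ}
    (hmono : ∀ x y : ℕ, s ≤ x → y < s + cj → x < y → f y < f x) :
    fixCnt s cj f ≤ 1 := by
  rw [fixCnt, Finset.card_le_one]
  intro a ha b hb
  rw [Finset.mem_filter, Finset.mem_range] at ha hb
  by_contra hab
  rcases Nat.lt_or_ge a b with h | h
  · have := hmono (s + a) (s + b) (by omega) (by omega) (by omega)
    omega
  · have := hmono (s + b) (s + a) (by omega) (by omega) (by omega)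
    omega

theorem fixCnt_le (s cj : ℕ) (f : ℕ → ℕ) : fixCnt s cj f ≤ cj := by
  have := Finset.card_le_card (Finset.filter_subset (fun t => f (s + t) = s + t)
    (Finset.range cj))
  simpa [fixCnt] using this

end Tri

/-! ### Insertion of a block of fixed points -/

section Ins

variable {u t : ℕ}

/-- Value embedding skipping the interval `[u, u+t)`. -/
def iv (u t v : ℕ) : ℕ := if v < u then v else v + t

/-- Value retraction collapsing the interval `[u, u+t)`. -/
def rv (u t y : ℕ) : ℕ := if y < u then y else y - t

/-- Insert a block of `t` fixed points at `[u, u+t)` into (the `appl` of) `f`. -/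
def insF (u t : ℕ) (f : ℕ → ℕ) (y : ℕ) : ℕ :=
  if y < u then iv u t (f y) else if y < u + t then y else iv u t (f (y - t))

theorem iv_lt {v : ℕ} (h : v < u) : iv u t v = v := if_pos h
theorem iv_ge {v : ℕ} (h : u ≤ v) : iv u t v = v + t := if_neg (by omega)
theorem rv_lt {y : ℕ} (h : y < u) : rv u t y = y := if_pos h
theorem rv_ge {y : ℕ} (h : u ≤ y) : rv u t y = y - t := if_neg (by omega)

theorem iv_strictMono {a b : ℕ} (h : a < b) : iv u t a < iv u t b := by
  unfold iv; split_ifs <;> omega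

theorem iv_lt_iff {a b : ℕ} : iv u t a < iv u t b ↔ a < b := by
  unfold iv; split_ifs <;> omega

theorem iv_inj {a b : ℕ} (h : iv u t a = iv u t b) : a = b := by
  unfold iv at h; split_ifs at h <;> omega

theorem rv_iv (v : ℕ) : rv u t (iv u t v) = v := by
  unfold iv rv; split_ifs <;> omega

theorem iv_rv {y : ℕ} (h : y < u ∨ u + t ≤ y) : iv u t (rv u t y) = y := by
  unfold iv rv; split_ifs <;> omega

theorem insF_eval_lt {f : ℕ → ℕ} {y : ℕ} (hy : y < u) : insF u t f y = iv u t (f y) := by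
  simp [insF, hy]

theorem insF_eval_mid {f : ℕ → ℕ} {y : ℕ} (h1 : u ≤ y) (h2 : y < u + t) :
    insF u t f y = y := by
  simp [insF, Nat.not_lt.2 h1, h2]

theorem insF_eval_ge {f : ℕ → ℕ} {y : ℕ} (h : u + t ≤ y) :
    insF u t f y = iv u t (f (y - t)) := by
  have h1 : ¬ y < u := by omega
  have h2 : ¬ y < u + t := by omega
  simp [insF, h1, h2]

theorem insF_insF {f g : ℕ → ℕ} (hgf : ∀ x, g (f x) = x) (y : ℕ) :
    insF u t g (insF u t f y) = y := by
  rcases lt_or_ge y u with hy | hy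
  · rw [insF_eval_lt hy]
    rcases lt_or_ge (f y) u with hf | hf
    · rw [iv_lt hf, insF_eval_lt (by omega), hgf, iv_lt hy]
    · rw [iv_ge hf, insF_eval_ge (by omega), Nat.add_sub_cancel, hgf, iv_lt hy]
  · rcases lt_or_ge y (u + t) with hy2 | hy2
    · rw [insF_eval_mid hy hy2, insF_eval_mid hy hy2]
    · rw [insF_eval_ge hy2]
      rcases lt_or_ge (f (y - t)) u with hf | hf
      · rw [iv_lt hf, insF_eval_lt (by omega), hgf, iv_ge (by omega)]
        omega
      · rw [iv_ge hf, insF_eval_ge (by omega), Nat.add_sub_cancel, hgf, iv_ge (by omega)]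
        omega

theorem insF_bound {n : ℕ} {f : ℕ → ℕ} (hu : u ≤ n) (hf : ∀ x, x < n → f x < n)
    {y : ℕ} (hy : y < n + t) : insF u t f y < n + t := by
  rcases lt_or_ge y u with h | h
  · rw [insF_eval_lt h]
    have := hf y (by omega)
    unfold iv; split_ifs <;> omega
  · rcases lt_or_ge y (u + t) with h2 | h2
    · rw [insF_eval_mid h h2]; omega
    · rw [insF_eval_ge h2]
      have := hf (y - t) (by omega)
      unfold iv; split_ifs <;> omega

/-- The permutation of `Fin (n + t)` obtained by inserting `t` fixed points at `[u,u+t)`. -/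
def insP {n : ℕ} (u t : ℕ) (hu : u ≤ n) (π : Equiv.Perm (Fin n)) :
    Equiv.Perm (Fin (n + t)) where
  toFun y := ⟨insF u t (appl π) y.1,
    insF_bound hu (fun x hx => appl_lt π hx) y.2⟩
  invFun y := ⟨insF u t (appl π.symm) y.1,
    insF_bound hu (fun x hx => appl_lt π.symm hx) y.2⟩
  left_inv y := by
    ext
    exact insF_insF (appl_symm_appl π) y.1
  right_inv y := by
    ext
    exact insF_insF (appl_symm_appl' π) y.1

theorem appl_insP {n : ℕ} (hu : u ≤ n) (π : Equiv.Perm (Fin n)) (y : ℕ) :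
    appl (insP u t hu π) y = insF u t (appl π) y := by
  by_cases hy : y < n + t
  · rw [appl, dif_pos hy]; rfl
  · rw [appl_of_ge _ (by omega), insF_eval_ge (by omega), appl_of_ge π (by omega),
      iv_ge (by omega)]
    omega

theorem insF_iv {f : ℕ → ℕ} (x : ℕ) : insF u t f (iv u t x) = iv u t (f x) := by
  rcases lt_or_ge x u with h | h
  · rw [iv_lt h, insF_eval_lt h]
  · rw [iv_ge h, insF_eval_ge (by omega), Nat.add_sub_cancel]

theorem insF_fix_lt {f : ℕ → ℕ} {y : ℕ} (hy : y < u) : insF u t f y = y ↔ f y = y := by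
  rw [insF_eval_lt hy]
  rcases lt_or_ge (f y) u with h | h
  · rw [iv_lt h]
  · rw [iv_ge h]; omega

theorem insF_fix_ge {f : ℕ → ℕ} {y : ℕ} (hy : u + t ≤ y) :
    insF u t f y = y ↔ f (y - t) = y - t := by
  rw [insF_eval_ge hy]
  rcases lt_or_ge (f (y - t)) u with h | h
  · rw [iv_lt h]; omega
  · rw [iv_ge h]; omega

end Ins

/-! ### Deletion of a block of fixed points -/

section Del

variable {n u t : ℕ}

theorem iv_zero (u v : ℕ) : iv u 0 v = v := by unfold iv; split_ifs <;> omega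

theorem insF_zero (u : ℕ) (f : ℕ → ℕ) (y : ℕ) : insF u 0 f y = f y := by
  rcases lt_or_ge y u with h | h
  · rw [insF_eval_lt h, iv_zero]
  · rw [insF_eval_ge (by omega), iv_zero, Nat.sub_zero]

theorem rv_lt_iff {a b : ℕ} (ha : a < u ∨ u + t ≤ a) (hb : b < u ∨ u + t ≤ b) :
    rv u t a < rv u t b ↔ a < b := by
  unfold rv; split_ifs <;> omega

theorem iv_notin (x : ℕ) : iv u t x < u ∨ u + t ≤ iv u t x := by
  unfold iv; split_ifs <;> omega

theorem appl_fix_symm (π : Equiv.Perm (Fin n)) {y : ℕ} (h : appl π y = y) :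
    appl π.symm y = y := by
  conv_lhs => rw [← h, appl_symm_appl]

theorem appl_notin_interval (π : Equiv.Perm (Fin n))
    (hfix : ∀ y, u ≤ y → y < u + t → appl π y = y) {z : ℕ}
    (hz : z < u ∨ u + t ≤ z) : appl π z < u ∨ u + t ≤ appl π z := by
  by_contra hc
  push_neg at hc
  have h1 := hfix (appl π z) (by omega) (by omega)
  have := appl_injective π h1
  omega

/-- Delete the pointwise-fixed interval `[u, u+t)` from a permutation. -/
def delP (hut : u + t ≤ n) (π : Equiv.Perm (Fin n))
    (hfix : ∀ y, u ≤ y → y < u + t → appl π y = y) : Equiv.Perm (Fin (n - t)) where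
  toFun x := ⟨rv u t (appl π (iv u t x.1)), by
    have hiv : iv u t x.1 < n := by have := x.2; unfold iv; split_ifs <;> omega
    have h1 := appl_lt π hiv
    have h2 := appl_notin_interval π hfix (z := iv u t x.1) (iv_notin x.1)
    unfold rv; split_ifs <;> omega⟩
  invFun x := ⟨rv u t (appl π.symm (iv u t x.1)), by
    have hiv : iv u t x.1 < n := by have := x.2; unfold iv; split_ifs <;> omega
    have h1 := appl_lt π.symm hiv
    have h2 := appl_notin_interval π.symm
      (fun y hy1 hy2 => appl_fix_symm π (hfix y hy1 hy2)) (z := iv u t x.1) (iv_notin x.1)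
    unfold rv; split_ifs <;> omega⟩
  left_inv x := by
    ext
    have h2 := appl_notin_interval π hfix (z := iv u t x.1) (iv_notin x.1)
    show rv u t (appl π.symm (iv u t (rv u t (appl π (iv u t x.1))))) = x.1
    rw [iv_rv h2, appl_symm_appl, rv_iv]
  right_inv x := by
    ext
    have h2 := appl_notin_interval π.symm
      (fun y hy1 hy2 => appl_fix_symm π (hfix y hy1 hy2)) (z := iv u t x.1) (iv_notin x.1)
    show rv u t (appl π (iv u t (rv u t (appl π.symm (iv u t x.1))))) = x.1
    rw [iv_rv h2, appl_symm_appl', rv_iv]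

theorem appl_delP (hut : u + t ≤ n) (π : Equiv.Perm (Fin n))
    (hfix : ∀ y, u ≤ y → y < u + t → appl π y = y) (x : ℕ) :
    appl (delP hut π hfix) x = rv u t (appl π (iv u t x)) := by
  by_cases hx : x < n - t
  · rw [appl, dif_pos hx]
    simp only [delP, Equiv.coe_fn_mk]
  · rw [appl_of_ge _ (by omega)]
    have hu : u ≤ x := by omega
    rw [iv_ge hu, appl_of_ge π (by omega), rv_ge (by omega)]
    omega

theorem ins_del (hut : u + t ≤ n) (π : Equiv.Perm (Fin n))
    (hfix : ∀ y, u ≤ y → y < u + t → appl π y = y) (y : ℕ) :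
    insF u t (appl (delP hut π hfix)) y = appl π y := by
  have hdel := appl_delP hut π hfix
  rcases lt_or_ge y u with hy | hy
  · rw [insF_eval_lt hy, hdel, iv_lt hy,
      iv_rv (appl_notin_interval π hfix (Or.inl hy))]
  · rcases lt_or_ge y (u + t) with hy2 | hy2
    · rw [insF_eval_mid hy hy2, hfix y hy hy2]
    · have h3 : iv u t (y - t) = y := by rw [iv_ge (by omega)]; omega
      rw [insF_eval_ge hy2, hdel, h3, iv_rv (appl_notin_interval π hfix (Or.inr hy2))]

end Del

/-! ### Direction claims for a split point -/

section Claims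

theorem dec_low_ge {s m u : ℕ} {f : ℕ → ℕ}
    (hmono : ∀ x y : ℕ, s ≤ x → y < s + m → x < y → f y < f x)
    (hu : u ≤ s + m) (hP : ∀ x, s ≤ x → x < u → x < f x) :
    ∀ x, s ≤ x → x < u → u ≤ f x := by
  intro x hx hxu
  rcases Nat.eq_or_lt_of_le (show x + 1 ≤ u by omega) with he | hlt
  · have := hP x hx hxu; omega
  · have h1 := hP (u - 1) (by omega) (by omega)
    have h2 := hmono x (u - 1) hx (by omega) (by omega)
    omega

theorem dec_high_lt {s m u : ℕ} {f : ℕ → ℕ}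
    (hmono : ∀ x y : ℕ, s ≤ x → y < s + m → x < y → f y < f x)
    (hu : s ≤ u) (hR : ∀ x, u ≤ x → x < s + m → f x < x) :
    ∀ x, u ≤ x → x < s + m → f x < u := by
  intro x hx hxm
  rcases Nat.eq_or_lt_of_le hx with rfl | hlt
  · exact hR u le_rfl hxm
  · have h1 := hR u le_rfl (by omega)
    have h2 := hmono u x hu hxm hlt
    omega

end Claims

/-! ### The forward (insertion) transfer lemma -/

/-- Split point used when inserting into the reduced block (of size `c jf - h`). -/
def usplit {k : ℕ} (S : Finset (Fin k)) (jf : Fin k) (c : Fin k → ℕ) (h : ℕ)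
    (f' : ℕ → ℕ) : ℕ :=
  splitPt (decide (jf ∈ S)) (blockStart c jf) (c jf - h) f'

theorem fixCnt_eq_of_char {s cj u h : ℕ} {g : ℕ → ℕ} (hu : s ≤ u) (hu2 : u + h ≤ s + cj)
    (hchar : ∀ x, s ≤ x → x < s + cj → (g x = x ↔ (u ≤ x ∧ x < u + h))) :
    fixCnt s cj g = h := by
  unfold fixCnt
  have heq : (Finset.range cj).filter (fun t => g (s + t) = s + t) =
      Finset.Ico (u - s) (u - s + h) := by
    ext a
    simp only [Finset.mem_filter, Finset.mem_range, Finset.mem_Ico]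
    constructor
    · rintro ⟨ha, he⟩
      have := (hchar (s + a) (by omega) (by omega)).mp he
      omega
    · rintro ⟨h1, h2⟩
      refine ⟨by omega, (hchar (s + a) (by omega) (by omega)).mpr (by omega)⟩
  rw [heq, Nat.card_Ico]
  omega

theorem fwd_main {k : ℕ} {S : Finset (Fin k)} {jf : Fin k} {c : Fin k → ℕ} {h : ℕ}
    (hh : h ≤ c jf) (hdec : jf ∈ S → h ≤ 1) {f' : ℕ → ℕ}
    (hBM' : BM (Function.update c jf (c jf - h)) S f')
    (hnf' : ∀ x, blockStart c jf ≤ x → x < blockStart c jf + (c jf - h) → f' x ≠ x) :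
    (blockStart c jf ≤ usplit S jf c h f' ∧
      usplit S jf c h f' + h ≤ blockStart c jf + c jf ∧
      usplit S jf c h f' ≤ blockStart c jf + (c jf - h)) ∧
    BM c S (insF (usplit S jf c h f') h f') ∧
    (∀ x, blockStart c jf ≤ x → x < blockStart c jf + c jf →
      (insF (usplit S jf c h f') h f' x = x ↔
        (usplit S jf c h f' ≤ x ∧ x < usplit S jf c h f' + h))) := by
  set s := blockStart c jf with hs
  set cjh := c jf - h with hcjh
  set u := usplit S jf c h f' with hu
  set c' := Function.update c jf (c jf - h) with hc'
  have hb1 : blockStart c' jf = s := blockStart_update_of_le le_rfl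
  have hb2 : c' jf = cjh := Function.update_self _ _ _
  have mono' : ∀ x y : ℕ, s ≤ x → y < s + cjh → x < y →
      (if decide (jf ∈ S) = true then f' y < f' x else f' x < f' y) := by
    intro x y hx hy hxy
    have := hBM' jf x y (by rw [hb1]; exact hx) (by rw [hb1, hb2]; exact hy) hxy
    by_cases hjs : jf ∈ S <;> simp [hjs] at this ⊢ <;> exact this
  have htri := tri (decide (jf ∈ S)) mono'
  have hfix0 : fixCnt s cjh f' = 0 := by
    unfold fixCnt
    rw [Finset.card_eq_zero, Finset.eq_empty_iff_forall_notMem]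
    intro a ha
    rw [Finset.mem_filter, Finset.mem_range] at ha
    exact hnf' (s + a) (by omega) (by omega) ha.2
  rw [hfix0] at htri
  have husp : splitPt (decide (jf ∈ S)) s cjh f' = u := rfl
  rw [husp] at htri
  have ha1 : s ≤ u := by rw [hu]; exact Nat.le_add_right _ _
  have ha2 : u ≤ s + cjh := by omega
  have ha3 : u + h ≤ s + c jf := by omega
  have triP : ∀ x : ℕ, s ≤ x → x < s + cjh → x < u → Pdir (decide (jf ∈ S)) f' x := by
    intro x hx hx' hxu
    exact (htri.2 x hx hx').1 hxu
  have triR : ∀ x : ℕ, s ≤ x → x < s + cjh → u ≤ x → Pdir (!decide (jf ∈ S)) f' x := by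
    intro x hx hx' hxu
    exact (htri.2 x hx hx').2.2 (by omega)
  refine ⟨⟨ha1, ha3, ha2⟩, ?_, ?_⟩
  · -- BM c S (insF u h f')
    intro i x y hx hy hxy
    rcases lt_trichotomy i jf with hij | hij | hij
    · -- earlier block
      have hylt : y < u := by
        have := blockStart_mono_le (c := c) hij
        omega
      have hbi : blockStart c' i = blockStart c i := blockStart_update_of_le (le_of_lt hij)
      have hci : c' i = c i := Function.update_of_ne (by intro he; subst he; exact lt_irrefl _ hij) _ _
      have hB := hBM' i x y (by rw [hbi]; exact hx) (by rw [hbi, hci]; exact hy) hxy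
      rw [insF_eval_lt hylt, insF_eval_lt (show x < u by omega)]
      by_cases his : i ∈ S <;>
        simp [his] at hB ⊢ <;> exact iv_strictMono hB
    · -- block jf itself
      subst hij
      rw [← hs] at hx hy
      have mono'' : ∀ a b : ℕ, s ≤ a → b < s + cjh → a < b →
          (if i ∈ S then f' b < f' a else f' a < f' b) := by
        intro a b h1 h2 h3
        have := mono' a b h1 h2 h3
        by_cases hjs : i ∈ S <;> simp [hjs] at this ⊢ <;> exact this
      by_cases hjs : i ∈ S
      · -- decreasing block
        have hh1 : h ≤ 1 := hdec hjs
        have monod : ∀ a b : ℕ, s ≤ a → b < s + cjh → a < b → f' b < f' a := by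
          intro a b h1 h2 h3
          have := mono'' a b h1 h2 h3
          rwa [if_pos hjs] at this
        have clow1 : ∀ x', s ≤ x' → x' < u → x' < f' x' := by
          intro x' h1 h2
          have := triP x' h1 (by omega) h2
          simpa [Pdir, hjs] using this
        have clow2 : ∀ x', s ≤ x' → x' < u → u ≤ f' x' :=
          dec_low_ge monod ha2 clow1
        have chigh1 : ∀ x', u ≤ x' → x' < s + cjh → f' x' < x' := by
          intro x' h1 h2
          have := triR x' (by omega) h2 h1
          simpa [Pdir, hjs] using this
        have chigh2 : ∀ x', u ≤ x' → x' < s + cjh → f' x' < u :=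
          dec_high_lt monod ha1 (fun x' h1 h2 => chigh1 x' h1 h2)
        rw [if_pos hjs]
        rcases lt_or_ge x u with hxu | hxu
        · rcases lt_or_ge y u with hyu | hyu
          · rw [insF_eval_lt hxu, insF_eval_lt hyu,
              iv_ge (clow2 x hx hxu), iv_ge (clow2 y (by omega) hyu)]
            have := monod x y hx (by omega) hxy
            omega
          · rcases lt_or_ge y (u + h) with hy2 | hy2
            · rw [insF_eval_lt hxu, insF_eval_mid hyu hy2, iv_ge (clow2 x hx hxu)]
              have := clow2 x hx hxu
              omega
            · rw [insF_eval_lt hxu, insF_eval_ge hy2, iv_ge (clow2 x hx hxu),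
                iv_lt (chigh2 (y - h) (by omega) (by omega))]
              have h1 := clow2 x hx hxu
              have h2 := chigh2 (y - h) (by omega) (by omega)
              omega
        · rcases lt_or_ge x (u + h) with hx2 | hx2
          · rcases lt_or_ge y (u + h) with hy2 | hy2
            · omega
            · rw [insF_eval_mid hxu hx2, insF_eval_ge hy2,
                iv_lt (chigh2 (y - h) (by omega) (by omega))]
              have := chigh2 (y - h) (by omega) (by omega)
              omega
          · rw [insF_eval_ge hx2, insF_eval_ge (by omega),
              iv_lt (chigh2 (y - h) (by omega) (by omega)),
              iv_lt (chigh2 (x - h) (by omega) (by omega))]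
            exact monod (x - h) (y - h) (by omega) (by omega) (by omega)
      · -- increasing block
        have monoi : ∀ a b : ℕ, s ≤ a → b < s + cjh → a < b → f' a < f' b := by
          intro a b h1 h2 h3
          have := mono'' a b h1 h2 h3
          rwa [if_neg hjs] at this
        have clow : ∀ x', s ≤ x' → x' < u → f' x' < x' := by
          intro x' h1 h2
          have := triP x' h1 (by omega) h2
          simpa [Pdir, hjs] using this
        have chigh : ∀ x', u ≤ x' → x' < s + cjh → x' < f' x' := by
          intro x' h1 h2
          have := triR x' (by omega) h2 h1
          simpa [Pdir, hjs] using this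
        rw [if_neg hjs]
        rcases lt_or_ge x u with hxu | hxu
        · rcases lt_or_ge y u with hyu | hyu
          · rw [insF_eval_lt hxu, insF_eval_lt hyu]
            exact iv_strictMono (monoi x y hx (by omega) hxy)
          · rcases lt_or_ge y (u + h) with hy2 | hy2
            · rw [insF_eval_lt hxu, insF_eval_mid hyu hy2,
                iv_lt (by have := clow x hx hxu; omega)]
              have := clow x hx hxu
              omega
            · rw [insF_eval_lt hxu, insF_eval_ge hy2,
                iv_lt (by have := clow x hx hxu; omega),
                iv_ge (by have := chigh (y - h) (by omega) (by omega); omega)]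
              have h1 := clow x hx hxu
              have h2 := chigh (y - h) (by omega) (by omega)
              omega
        · rcases lt_or_ge x (u + h) with hx2 | hx2
          · rcases lt_or_ge y (u + h) with hy2 | hy2
            · rw [insF_eval_mid hxu hx2, insF_eval_mid (by omega) hy2]
              omega
            · rw [insF_eval_mid hxu hx2, insF_eval_ge hy2,
                iv_ge (by have := chigh (y - h) (by omega) (by omega); omega)]
              have := chigh (y - h) (by omega) (by omega)
              omega
          · rw [insF_eval_ge hx2, insF_eval_ge (by omega),
              iv_ge (by have := chigh (x - h) (by omega) (by omega); omega),
              iv_ge (by have := chigh (y - h) (by omega) (by omega); omega)]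
            have := monoi (x - h) (y - h) (by omega) (by omega) (by omega)
            omega
    · -- later block
      have hxgt : u + h ≤ x := by
        have := blockStart_mono_le (c := c) hij
        omega
      have hbi : blockStart c' i + h = blockStart c i := blockStart_update_of_gt hh hij
      have hci : c' i = c i := Function.update_of_ne (by intro he; subst he; exact lt_irrefl _ hij) _ _
      have hB := hBM' i (x - h) (y - h) (by omega) (by rw [hci]; omega) (by omega)
      rw [insF_eval_ge (show u + h ≤ x by omega), insF_eval_ge (show u + h ≤ y by omega)]
      by_cases his : i ∈ S <;>
        simp [his] at hB ⊢ <;> exact iv_strictMono hB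
  · -- fixed point characterization in block jf
    intro x hx hx'
    rcases lt_or_ge x u with hxu | hxu
    · rw [insF_eval_lt hxu]
      constructor
      · intro heq
        exfalso
        by_cases hjs : jf ∈ S
        · have h1 := triP x hx (by omega) hxu
          simp only [Pdir, hjs, decide_true, if_true] at h1
          have h2 := dec_low_ge (fun a b u1 u2 u3 => by
              have := mono' a b u1 u2 u3
              simpa [hjs] using this) ha2
            (fun x' a b => by
              have := triP x' a (by omega) b
              simpa [Pdir, hjs] using this) x hx hxu
          rw [iv_ge h2] at heq
          omega
        · have h1 := triP x hx (by omega) hxu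
          simp [Pdir, hjs] at h1
          rw [iv_lt (by omega)] at heq
          omega
      · intro h1; omega
    · rcases lt_or_ge x (u + h) with hx2 | hx2
      · rw [insF_eval_mid hxu hx2]
        simp [hxu, hx2]
      · rw [insF_fix_ge hx2]
        constructor
        · intro heq
          exact absurd heq (hnf' (x - h) (by omega) (by omega))
        · intro h1; omega

/-! ### The backward (deletion) transfer lemma -/

/-- Split point of the full block (of size `c jf`). -/
def usplit0 {k : ℕ} (S : Finset (Fin k)) (jf : Fin k) (c : Fin k → ℕ) (f : ℕ → ℕ) : ℕ :=
  splitPt (decide (jf ∈ S)) (blockStart c jf) (c jf) f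

theorem bwd_main {k : ℕ} {S : Finset (Fin k)} {jf : Fin k} {c : Fin k → ℕ}
    {π : Equiv.Perm (Fin (∑ t, c t))} (hBM : BM c S (appl π)) :
    ∀ u h : ℕ, u = usplit0 S jf c (appl π) → h = fixCnt (blockStart c jf) (c jf) (appl π) →
    (blockStart c jf ≤ u ∧ u + h ≤ blockStart c jf + c jf ∧ h ≤ c jf ∧
      (jf ∈ S → h ≤ 1)) ∧
    (∀ y, u ≤ y → y < u + h → appl π y = y) ∧
    (BM (Function.update c jf (c jf - h)) S (fun x => rv u h (appl π (iv u h x)))) ∧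
    (∀ x, blockStart c jf ≤ x → x < blockStart c jf + (c jf - h) →
      rv u h (appl π (iv u h x)) ≠ x) ∧
    (usplit S jf c h (fun x => rv u h (appl π (iv u h x))) = u) := by
  intro u h hueq hheq
  set s := blockStart c jf with hs
  set f := appl π with hf
  have mono' : ∀ x y : ℕ, s ≤ x → y < s + c jf → x < y →
      (if decide (jf ∈ S) = true then f y < f x else f x < f y) := by
    intro x y hx hy hxy
    have := hBM jf x y hx hy hxy
    by_cases hjs : jf ∈ S <;> simp [hjs] at this ⊢ <;> exact this
  have htri := tri (decide (jf ∈ S)) mono'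
  have hueq' : u = splitPt (decide (jf ∈ S)) s (c jf) f := hueq
  have hheq' : h = fixCnt s (c jf) f := hheq
  rw [← hueq', ← hheq'] at htri
  have ha1 : s ≤ u := by rw [hueq']; exact Nat.le_add_right _ _
  have ha2 : u + h ≤ s + c jf := htri.1
  have hhcj : h ≤ c jf := by rw [hheq']; exact fixCnt_le _ _ _
  have hdec : jf ∈ S → h ≤ 1 := by
    intro hjs
    rw [hheq']
    apply fixCnt_le_one
    intro x y hx hy hxy
    have := mono' x y hx hy hxy
    simpa [hjs] using this
  have hfixI : ∀ y, u ≤ y → y < u + h → f y = y := by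
    intro y hy1 hy2
    exact (htri.2 y (by omega) (by omega)).2.1 hy1 hy2
  have hcompl : ∀ z : ℕ, (z < u ∨ u + h ≤ z) → (f z < u ∨ u + h ≤ f z) :=
    fun z hz => appl_notin_interval π hfixI hz
  have triP : ∀ x : ℕ, s ≤ x → x < s + c jf → x < u → Pdir (decide (jf ∈ S)) f x := by
    intro x hx hx' hxu
    exact (htri.2 x hx hx').1 hxu
  have triR : ∀ x : ℕ, s ≤ x → x < s + c jf → u + h ≤ x → Pdir (!decide (jf ∈ S)) f x := by
    intro x hx hx' hxu
    exact (htri.2 x hx hx').2.2 hxu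
  set c' := Function.update c jf (c jf - h) with hc'
  have hb1 : blockStart c' jf = s := blockStart_update_of_le le_rfl
  have hb2 : c' jf = c jf - h := Function.update_self _ _ _
  set f' := fun x => rv u h (f (iv u h x)) with hf'
  -- pointwise description of f' on the block
  have hlow : ∀ x, s ≤ x → x < u → (if jf ∈ S then x < f' x ∧ u ≤ f x else f' x < x) := by
    intro x hx hxu
    have hP := triP x hx (by omega) hxu
    have hiv : iv u h x = x := iv_lt hxu
    by_cases hjs : jf ∈ S
    · simp only [Pdir, hjs, decide_true, if_true] at hP
      have h2 : u ≤ f x := by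
        refine dec_low_ge (f := f) (m := c jf) ?_ (by omega) ?_ x hx hxu
        · intro a b u1 u2 u3
          have := mono' a b u1 u2 u3
          simpa [hjs] using this
        · intro x' u1 u2
          have := triP x' u1 (by omega) u2
          simpa [Pdir, hjs] using this
      have h3 : u + h ≤ f x := by
        rcases hcompl x (Or.inl hxu) with h4 | h4 <;> omega
      rw [if_pos hjs, hf']
      simp only
      rw [hiv, rv_ge (by omega)]
      exact ⟨by omega, h2⟩
    · simp [Pdir, hjs] at hP
      rw [if_neg hjs, hf']
      simp only
      rw [hiv, rv_lt (by omega)]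
      exact hP
  have hhigh : ∀ x, u ≤ x → x < s + (c jf - h) →
      (if jf ∈ S then f' x < x else x < f' x) := by
    intro x hx1 hx2
    have hiv : iv u h x = x + h := iv_ge hx1
    have hR := triR (x + h) (by omega) (by omega) (by omega)
    by_cases hjs : jf ∈ S
    · simp [Pdir, hjs] at hR
      rw [if_pos hjs, hf']
      simp only
      rw [hiv]
      rcases hcompl (x + h) (Or.inr (by omega)) with h4 | h4
      · rw [rv_lt h4]; omega
      · rw [rv_ge (by omega)]; omega
    · simp [Pdir, hjs] at hR
      rw [if_neg hjs, hf']
      simp only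
      rw [hiv, rv_ge (by omega)]
      omega
  refine ⟨⟨ha1, ha2, hhcj, hdec⟩, hfixI, ?_, ?_, ?_⟩
  · -- BM c' S f'
    intro i x y hx hy hxy
    rcases lt_trichotomy i jf with hij | hij | hij
    · have hbi : blockStart c' i = blockStart c i := blockStart_update_of_le (le_of_lt hij)
      have hci : c' i = c i := Function.update_of_ne (by intro he; subst he; exact lt_irrefl _ hij) _ _
      rw [hbi] at hx hy
      rw [hci] at hy
      have hylt : y < u := by
        have := blockStart_mono_le (c := c) hij
        omega
      have hB := hBM i x y hx hy hxy
      have hex : ∀ z, z < u → f' z = rv u h (f z) := by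
        intro z hz
        rw [hf']
        simp only
        rw [iv_lt hz]
      rw [hex x (by omega), hex y (by omega)]
      have hrx := hcompl x (Or.inl (by omega))
      have hry := hcompl y (Or.inl (by omega))
      by_cases his : i ∈ S <;> simp [his] at hB ⊢
      · exact (rv_lt_iff hry hrx).mpr hB
      · exact (rv_lt_iff hrx hry).mpr hB
    · subst hij
      rw [hb1] at hx
      rw [hb1, hb2] at hy
      have hivx : iv u h x < u ∨ u + h ≤ iv u h x := iv_notin x
      have hivy : iv u h y < u ∨ u + h ≤ iv u h y := iv_notin y
      have hin1 : s ≤ iv u h x := by unfold iv; split_ifs <;> omega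
      have hin2 : iv u h y < s + c i := by unfold iv; split_ifs <;> omega
      have hB := hBM i (iv u h x) (iv u h y) hin1 hin2 (iv_strictMono hxy)
      have hrx := hcompl (iv u h x) hivx
      have hry := hcompl (iv u h y) hivy
      rw [hf']
      simp only
      by_cases his : i ∈ S <;> simp [his] at hB ⊢
      · exact (rv_lt_iff hry hrx).mpr hB
      · exact (rv_lt_iff hrx hry).mpr hB
    · have hbi : blockStart c' i + h = blockStart c i := blockStart_update_of_gt hhcj hij
      have hci : c' i = c i := Function.update_of_ne (by intro he; subst he; exact lt_irrefl _ hij) _ _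
      have hxge : s + (c jf - h) ≤ x := by
        have h5 := blockStart_mono_le (c := c') hij
        rw [hb1, hb2] at h5
        omega
      have hxu : u ≤ x := by omega
      have hivx : iv u h x = x + h := iv_ge hxu
      have hivy : iv u h y = y + h := iv_ge (by omega)
      have hB := hBM i (x + h) (y + h) (by omega) (by rw [hci] at hy; omega) (by omega)
      have hrx := hcompl (x + h) (Or.inr (by omega))
      have hry := hcompl (y + h) (Or.inr (by omega))
      rw [hf']
      simp only
      rw [hivx, hivy]
      by_cases his : i ∈ S <;> simp [his] at hB ⊢
      · exact (rv_lt_iff hry hrx).mpr hB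
      · exact (rv_lt_iff hrx hry).mpr hB
  · -- no fixed points of f' in the reduced block jf
    intro x hx1 hx2
    have hfx : f' x = rv u h (f (iv u h x)) := rfl
    rcases lt_or_ge x u with hxu | hxu
    · have := hlow x hx1 hxu
      by_cases hjs : jf ∈ S <;> simp [hjs] at this <;> omega
    · have := hhigh x hxu hx2
      by_cases hjs : jf ∈ S <;> simp [hjs] at this <;> omega
  · -- the split point of f' is u
    unfold usplit splitPt
    have hflt : (Finset.range (c jf - h)).filter
        (fun t => Pdir (decide (jf ∈ S)) f' (s + t)) = Finset.range (u - s) := by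
      ext a
      simp only [Finset.mem_filter, Finset.mem_range]
      constructor
      · rintro ⟨ha, hP⟩
        by_contra hc
        have hua : u ≤ s + a := by omega
        have := hhigh (s + a) hua (by omega)
        by_cases hjs : jf ∈ S <;> simp [Pdir, hjs] at this hP <;> omega
      · intro ha
        have h1 : a < c jf - h := by omega
        have := hlow (s + a) (by omega) (by omega)
        refine ⟨h1, ?_⟩
        by_cases hjs : jf ∈ S <;> simp [Pdir, hjs] at this ⊢ <;> omega
    rw [hflt]
    simp only [Finset.card_range]
    omega

/-! ### Assembly helpers -/

theorem BM_congr {k : ℕ} {c : Fin k → ℕ} {S : Finset (Fin k)} {f g : ℕ → ℕ}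
    (hfg : ∀ x, f x = g x) (hbm : BM c S f) : BM c S g := by
  intro i x y h1 h2 h3
  have := hbm i x y h1 h2 h3
  rwa [hfg x, hfg y] at this

theorem fixCnt_congr {s cj : ℕ} {f g : ℕ → ℕ} (hfg : ∀ x, f x = g x) :
    fixCnt s cj f = fixCnt s cj g := by
  unfold fixCnt
  congr 1
  apply Finset.filter_congr
  intro t _
  simp [hfg]

theorem insF_congr {u t : ℕ} {f g : ℕ → ℕ} (hfg : ∀ x, f x = g x) (y : ℕ) :
    insF u t f y = insF u t g y := by
  unfold insF
  rw [hfg, hfg]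

theorem natCard_sigma {ι : Type*} [Fintype ι] (g : ι → Type*) [∀ i, Finite (g i)] :
    Nat.card ((i : ι) × g i) = ∑ i, Nat.card (g i) := by
  classical
  letI : ∀ i, Fintype (g i) := fun i => Fintype.ofFinite (g i)
  rw [Nat.card_eq_fintype_card, Fintype.card_sigma]
  exact Finset.sum_congr rfl fun i _ => (Nat.card_eq_fintype_card).symm

theorem usplit_le_start {k : ℕ} (S : Finset (Fin k)) (jf : Fin k) (c : Fin k → ℕ)
    (h : ℕ) (f' : ℕ → ℕ) :
    usplit S jf c h f' ≤ blockStart c jf + (c jf - h) := by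
  unfold usplit splitPt
  have := Finset.card_le_card (Finset.filter_subset
    (fun t => Pdir (decide (jf ∈ S)) f' (blockStart c jf + t)) (Finset.range (c jf - h)))
  simp only [Finset.card_range] at this
  omega

/-! ### The per-`h` fiber cardinality -/

theorem card_fiber {k : ℕ} (S : Finset (Fin k)) (j : ℕ) (hj : j < k) (c : Fin k → ℕ)
    (h : ℕ) (hh : h ≤ c ⟨j, hj⟩) (hdec1 : (⟨j, hj⟩ : Fin k) ∈ S → h ≤ 1) :
    Nat.card {π : Equiv.Perm (Fin (∑ t, c t)) //
      (IsASPerm c S π ∧ ∀ i : Fin k, (i : ℕ) < j → ∀ x : ℕ, inBlock c i x → appl π x ≠ x)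
      ∧ fixCnt (blockStart c ⟨j, hj⟩) (c ⟨j, hj⟩) (appl π) = h} =
    fcount k S (j + 1) (Function.update c ⟨j, hj⟩ (c ⟨j, hj⟩ - h)) := by
  classical
  set jf : Fin k := ⟨j, hj⟩ with hjf
  set s := blockStart c jf with hs
  set ch := Function.update c jf (c jf - h) with hch
  rw [fcount]
  have hn' : (∑ t, ch t) + h = ∑ t, c t := sum_update_add hh
  have hbs : blockStart ch jf = s := blockStart_update_of_le le_rfl
  have hcjf : ch jf = c jf - h := Function.update_self _ _ _
  have hupN : ∀ f' : ℕ → ℕ, usplit S jf c h f' ≤ ∑ t, ch t := by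
    intro f'
    have h1 := usplit_le_start S jf c h f'
    have h2 := blockStart_add_le ch jf
    rw [hbs, hcjf] at h2
    omega
  -- the insertion map
  set U : Equiv.Perm (Fin (∑ t, ch t)) → Equiv.Perm (Fin (∑ t, c t)) :=
    fun π' => (finCongr hn').permCongr
      (insP (usplit S jf c h (appl π')) h (hupN (appl π')) π') with hU
  have hUappl : ∀ π' y, appl (U π') y = insF (usplit S jf c h (appl π')) h (appl π') y := by
    intro π' y
    rw [hU]
    simp only
    rw [appl_permCongr, appl_insP]
  -- blocks of `ch` before `jf` agree with those of `c`
  have hbsi : ∀ i : Fin k, i < jf → blockStart ch i = blockStart c i ∧ ch i = c i := by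
    intro i hij
    exact ⟨blockStart_update_of_le (le_of_lt hij),
      Function.update_of_ne (by intro he; subst he; exact lt_irrefl _ hij) _ _⟩
  -- forward membership
  have hmem : ∀ π' : Equiv.Perm (Fin (∑ t, ch t)),
      (IsASPerm ch S π' ∧ ∀ i : Fin k, (i : ℕ) < j + 1 → ∀ x : ℕ, inBlock ch i x →
        appl π' x ≠ x) →
      ((IsASPerm c S (U π') ∧ ∀ i : Fin k, (i : ℕ) < j → ∀ x : ℕ, inBlock c i x →
        appl (U π') x ≠ x)
        ∧ fixCnt s (c jf) (appl (U π')) = h) := by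
    intro π' hπ'
    have hBM' : BM ch S (appl π') := isASPerm_iff_BM.mp hπ'.1
    have hnf' : ∀ x, s ≤ x → x < s + (c jf - h) → appl π' x ≠ x := by
      intro x h1 h2
      exact hπ'.2 jf (by simp [hjf]) x ⟨by rw [hbs]; exact h1, by rw [hbs, hcjf]; exact h2⟩
    have hfwd := fwd_main hh hdec1 hBM' hnf'
    set u := usplit S jf c h (appl π') with hu
    refine ⟨⟨?_, ?_⟩, ?_⟩
    · exact isASPerm_iff_BM.mpr (BM_congr (fun y => (hUappl π' y).symm) hfwd.2.1)
    · intro i hij x hx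
      have hij' : i < jf := hij
      have hxu : x < u := by
        have h1 := blockStart_mono_le (c := c) hij'
        have := hfwd.1.1
        rcases hx with ⟨hx1, hx2⟩
        omega
      rw [hUappl]
      show ¬ (insF u h (appl π') x = x)
      rw [insF_fix_lt hxu]
      obtain ⟨hb1, hb2⟩ := hbsi i hij'
      exact hπ'.2 i (by omega) x ⟨by rw [hb1]; exact hx.1, by rw [hb1, hb2]; exact hx.2⟩
    · rw [fixCnt_congr (hUappl π')]
      exact fixCnt_eq_of_char hfwd.1.1 hfwd.1.2.1 hfwd.2.2
  refine (Nat.card_congr (Equiv.ofBijective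
    (fun b : {π' : Equiv.Perm (Fin (∑ t, ch t)) //
        IsASPerm ch S π' ∧ ∀ i : Fin k, (i : ℕ) < j + 1 → ∀ x : ℕ, inBlock ch i x →
          appl π' x ≠ x} =>
      (⟨U b.1, hmem b.1 b.2⟩ : {π : Equiv.Perm (Fin (∑ t, c t)) //
        (IsASPerm c S π ∧ ∀ i : Fin k, (i : ℕ) < j → ∀ x : ℕ, inBlock c i x →
          appl π x ≠ x) ∧ fixCnt (blockStart c jf) (c jf) (appl π) = h}))
    ⟨?_, ?_⟩)).symm
  · -- injective
    intro b1 b2 heq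
    have heq' : U b1.1 = U b2.1 := congrArg Subtype.val heq
    have happ : ∀ y, appl (U b1.1) y = appl (U b2.1) y := by
      intro y; rw [heq']
    set u1 := usplit S jf c h (appl b1.1) with hu1
    set u2 := usplit S jf c h (appl b2.1) with hu2
    have happ2 : ∀ y, insF u1 h (appl b1.1) y = insF u2 h (appl b2.1) y := by
      intro y
      rw [← hUappl, ← hUappl]
      exact happ y
    rcases Nat.eq_zero_or_pos h with rfl | hpos
    · apply Subtype.ext
      apply perm_ext_appl
      intro x
      have := happ2 x
      rwa [insF_zero, insF_zero] at this
    · have hBM1 : BM ch S (appl b1.1) := isASPerm_iff_BM.mp b1.2.1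
      have hBM2 : BM ch S (appl b2.1) := isASPerm_iff_BM.mp b2.2.1
      have hnf1 : ∀ x, s ≤ x → x < s + (c jf - h) → appl b1.1 x ≠ x := by
        intro x h1 h2
        exact b1.2.2 jf (by simp [hjf]) x ⟨by rw [hbs]; exact h1, by rw [hbs, hcjf]; exact h2⟩
      have hnf2 : ∀ x, s ≤ x → x < s + (c jf - h) → appl b2.1 x ≠ x := by
        intro x h1 h2
        exact b2.2.2 jf (by simp [hjf]) x ⟨by rw [hbs]; exact h1, by rw [hbs, hcjf]; exact h2⟩
      have hfwd1 := fwd_main hh hdec1 hBM1 hnf1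
      have hfwd2 := fwd_main hh hdec1 hBM2 hnf2
      have hchar1 := hfwd1.2.2
      have hchar2 := hfwd2.2.2
      have hueq : u1 = u2 := by
        have e1 : insF u1 h (appl b1.1) u1 = u1 :=
          (hchar1 u1 hfwd1.1.1 (by have := hfwd1.1.2.1; omega)).mpr ⟨le_rfl, by omega⟩
        have e2 : insF u2 h (appl b2.1) u2 = u2 :=
          (hchar2 u2 hfwd2.1.1 (by have := hfwd2.1.2.1; omega)).mpr ⟨le_rfl, by omega⟩
        have e1' : insF u2 h (appl b2.1) u1 = u1 := by rw [← happ2]; exact e1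
        have e2' : insF u1 h (appl b1.1) u2 = u2 := by rw [happ2]; exact e2
        have r1 := (hchar2 u1 hfwd1.1.1 (by have := hfwd1.1.2.1; omega)).mp e1'
        have r2 := (hchar1 u2 hfwd2.1.1 (by have := hfwd2.1.2.1; omega)).mp e2'
        omega
      apply Subtype.ext
      apply perm_ext_appl
      intro x
      have := happ2 (iv u1 h x)
      rw [insF_iv] at this
      rw [← hueq] at this
      rw [insF_iv] at this
      exact iv_inj this
  · -- surjective
    rintro ⟨π, ⟨hP, hfixh⟩⟩
    have hBM : BM c S (appl π) := isASPerm_iff_BM.mp hP.1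
    have hbwd := bwd_main (jf := jf) hBM (usplit0 S jf c (appl π))
      (fixCnt s (c jf) (appl π)) rfl rfl
    rw [hfixh] at hbwd
    set u := usplit0 S jf c (appl π) with hu
    have hfixI := hbwd.2.1
    have hut : u + h ≤ ∑ t, c t := by
      have h1 := hbwd.1.2.1
      have h2 := blockStart_add_le c jf
      omega
    set π'0 := delP hut π hfixI with hπ'0
    have hcast : (∑ t, c t) - h = ∑ t, ch t := by omega
    set π' := (finCongr hcast).permCongr π'0 with hπ'
    have happl' : ∀ x, appl π' x = rv u h (appl π (iv u h x)) := by
      intro x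
      rw [hπ']
      rw [appl_permCongr]
      exact appl_delP hut π hfixI x
    have hfunext : appl π' = (fun x => rv u h (appl π (iv u h x))) := funext happl'
    have husp' : usplit S jf c h (appl π') = u := by
      rw [hfunext]
      exact hbwd.2.2.2.2
    have hmem' : IsASPerm ch S π' ∧ ∀ i : Fin k, (i : ℕ) < j + 1 → ∀ x : ℕ,
        inBlock ch i x → appl π' x ≠ x := by
      constructor
      · exact isASPerm_iff_BM.mpr (BM_congr (fun y => (happl' y).symm) hbwd.2.2.1)
      · intro i hij x hx
        rcases Nat.lt_or_ge (i : ℕ) j with hij' | hij'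
        · have hij2 : i < jf := hij'
          obtain ⟨hb1, hb2⟩ := hbsi i hij2
          obtain ⟨hx1, hx2⟩ := hx
          rw [hb1] at hx1 hx2
          rw [hb2] at hx2
          have hxu : x < u := by
            have h1 := blockStart_mono_le (c := c) hij2
            have h2 := hbwd.1.1
            omega
          rw [happl', iv_lt hxu]
          intro hcon
          have hfx : appl π x ≠ x := hP.2 i hij' x ⟨hx1, hx2⟩
          apply hfx
          have hnotin := appl_notin_interval π hfixI (z := x) (Or.inl hxu)
          have := iv_rv (u := u) (t := h) hnotin
          rw [hcon] at this
          rw [iv_lt hxu] at this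
          exact this.symm
        · have hij2 : (i : ℕ) = j := by omega
          have hijf : i = jf := Fin.ext hij2
          subst hijf
          rw [happl']
          rcases hx with ⟨hx1, hx2⟩
          rw [hbs] at hx1
          rw [hbs, hcjf] at hx2
          exact hbwd.2.2.2.1 x hx1 hx2
    refine ⟨⟨π', hmem'⟩, ?_⟩
    apply Subtype.ext
    show U π' = π
    apply perm_ext_appl
    intro y
    rw [hUappl, husp']
    have : insF u h (appl π') y = insF u h (appl π'0) y := by
      apply insF_congr
      intro x
      rw [hπ', appl_permCongr]
    rw [this]
    exact ins_del hut π hfixI y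

/-! ### Final assembly -/

theorem fcountZ_eval {k : ℕ} (S : Finset (Fin k)) (j' : ℕ) (c : Fin k → ℕ) (jf : Fin k)
    (h : ℕ) (hh : h ≤ c jf) :
    fcountZ k S j' (Function.update (fun i => (c i : ℤ)) jf ((c jf : ℤ) - (h : ℤ))) =
    fcount k S j' (Function.update c jf (c jf - h)) := by
  classical
  rw [fcountZ, if_pos]
  · congr 1
    funext i
    by_cases hi : i = jf
    · subst hi
      rw [Function.update_self, Function.update_self]
      omega
    · rw [Function.update_of_ne hi, Function.update_of_ne hi]
      simp
  · intro i
    by_cases hi : i = jf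
    · subst hi
      rw [Function.update_self]
      omega
    · rw [Function.update_of_ne hi]
      positivity

theorem key_fiber_decomp (N : ℕ) (P : Equiv.Perm (Fin N) → Prop)
    (F : Equiv.Perm (Fin N) → ℕ) (m : ℕ) (hb : ∀ π, P π → F π ≤ m) :
    Nat.card {π // P π} = ∑ hh ∈ Finset.range (m + 1), Nat.card {π // P π ∧ F π = hh} := by
  classical
  set φ : {π // P π} → Fin (m + 1) :=
    fun a => ⟨F a.1, Nat.lt_succ_of_le (hb a.1 a.2)⟩ with hφ
  calc Nat.card {π // P π}
      = Nat.card ((hf : Fin (m + 1)) × {a : {π // P π} // φ a = hf}) :=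
        (Nat.card_congr (Equiv.sigmaFiberEquiv φ)).symm
    _ = ∑ hf : Fin (m + 1), Nat.card {a : {π // P π} // φ a = hf} := natCard_sigma _
    _ = ∑ hf : Fin (m + 1), Nat.card {π // P π ∧ F π = (hf : ℕ)} := by
        apply Finset.sum_congr rfl
        intro hf _
        apply Nat.card_congr
        exact (Equiv.subtypeEquivRight (fun a => by
          rw [hφ]
          simp [Fin.ext_iff])).trans
          (Equiv.subtypeSubtypeEquivSubtypeInter P (fun π => F π = (hf : ℕ)))
    _ = ∑ hh ∈ Finset.range (m + 1), Nat.card {π // P π ∧ F π = hh} :=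
        Fin.sum_univ_eq_sum_range (fun hh => Nat.card {π // P π ∧ F π = hh}) (m + 1)

theorem fcount_recursion' (k : ℕ) (S : Finset (Fin k)) (j : ℕ) (hj : j < k)
    (c : Fin k → ℕ) :
    fcount k S j c =
      ∑ h ∈ Finset.range ((if (⟨j, hj⟩ : Fin k) ∈ S then 1 else c ⟨j, hj⟩) + 1),
        fcountZ k S (j + 1)
          (Function.update (fun i => (c i : ℤ)) ⟨j, hj⟩ ((c ⟨j, hj⟩ : ℤ) - h)) := by
  classical
  set jf : Fin k := ⟨j, hj⟩ with hjf
  by_cases hdeg : jf ∈ S ∧ c jf = 0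
  · obtain ⟨hjs, hc0⟩ := hdeg
    rw [if_pos hjs]
    rw [Finset.sum_range_succ, Finset.sum_range_one]
    have t1 : fcountZ k S (j + 1)
        (Function.update (fun i => (c i : ℤ)) jf ((c jf : ℤ) - ((1 : ℕ) : ℤ))) = 0 := by
      rw [fcountZ, if_neg]
      intro hall
      have := hall jf
      rw [Function.update_self] at this
      rw [hc0] at this
      norm_num at this
    have t0 : fcountZ k S (j + 1)
        (Function.update (fun i => (c i : ℤ)) jf ((c jf : ℤ) - ((0 : ℕ) : ℤ))) =
        fcount k S (j + 1) c := by
      rw [fcountZ_eval S (j + 1) c jf 0 (by omega)]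
      congr 1
      funext i
      by_cases hi : i = jf
      · subst hi; rw [Function.update_self]; omega
      · rw [Function.update_of_ne hi]
    have tL : fcount k S j c = fcount k S (j + 1) c := by
      rw [fcount, fcount]
      apply Nat.card_congr
      apply Equiv.subtypeEquivRight
      intro π
      constructor
      · rintro ⟨h1, h2⟩
        refine ⟨h1, fun i hi x hx => ?_⟩
        rcases Nat.lt_or_ge (i : ℕ) j with hij | hij
        · exact h2 i hij x hx
        · have hieq : i = jf := Fin.ext (by simp [hjf]; omega)
          subst hieq
          rcases hx with ⟨hx1, hx2⟩
          rw [hc0] at hx2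
          omega
      · rintro ⟨h1, h2⟩
        exact ⟨h1, fun i hi x hx => h2 i (by omega) x hx⟩
    rw [tL]
    push_cast at t1 t0 ⊢
    rw [t1, t0]
    omega
  · have hm : (if jf ∈ S then 1 else c jf) ≤ c jf := by
      by_cases hjs : jf ∈ S
      · rw [if_pos hjs]
        have : c jf ≠ 0 := fun hc => hdeg ⟨hjs, hc⟩
        omega
      · rw [if_neg hjs]
    set m := if jf ∈ S then 1 else c jf with hmdef
    have hφbound : ∀ π : Equiv.Perm (Fin (∑ t, c t)),
        (IsASPerm c S π ∧ ∀ i : Fin k, (i : ℕ) < j → ∀ x : ℕ, inBlock c i x →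
          appl π x ≠ x) →
        fixCnt (blockStart c jf) (c jf) (appl π) ≤ m := by
      intro π hp
      by_cases hjs : jf ∈ S
      · rw [hmdef, if_pos hjs]
        apply fixCnt_le_one
        intro x y hx hy hxy
        have := (isASPerm_iff_BM.mp hp.1) jf x y hx hy hxy
        rwa [if_pos hjs] at this
      · rw [hmdef, if_neg hjs]
        exact fixCnt_le _ _ _
    have hkey := key_fiber_decomp (∑ t, c t)
      (fun π => IsASPerm c S π ∧ ∀ i : Fin k, (i : ℕ) < j → ∀ x : ℕ, inBlock c i x →
        appl π x ≠ x)
      (fun π => fixCnt (blockStart c jf) (c jf) (appl π)) m hφbound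
    rw [fcount, hkey]
    apply Finset.sum_congr rfl
    intro hh hmem
    rw [Finset.mem_range] at hmem
    have hhcj : hh ≤ c jf := by omega
    have hdec1 : jf ∈ S → hh ≤ 1 := by
      intro hjs
      rw [hmdef, if_pos hjs] at hmem
      omega
    rw [card_fiber S j hj c hh hhcj hdec1, fcountZ_eval S (j + 1) c jf hh hhcj]

/-- The recursion `f_j(c) = ∑_{h=0}^{m_{j+1}} f_{j+1}(c₁,…,c_{j+1}-h,…,c_k)`,
where `m_i = 1` if `i ∈ S` and `m_i = c_i` if `i ∉ S` (blocks indexed from 0). -/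
theorem fcount_recursion (k : ℕ) (S : Finset (Fin k)) (j : ℕ) (hj : j < k)
    (c : Fin k → ℕ) :
    fcount k S j c =
      ∑ h ∈ Finset.range ((if (⟨j, hj⟩ : Fin k) ∈ S then 1 else c ⟨j, hj⟩) + 1),
        fcountZ k S (j + 1)
          (Function.update (fun i => (c i : ℤ)) ⟨j, hj⟩ ((c ⟨j, hj⟩ : ℤ) - h)) :=
  fcount_recursion' k S j hj c
end

section
/- If a permutation π is strictly decreasing on a block A_i, then there is a bijection between (a_1,…,a_i,…,a_k,S)-permutations with exactly one fixed point in A_i and (a_1,…,a_i−1,…,a_k,S)-permutations with no fixed points in A_i (where i ∈ S). -/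
/-- The number of fixed points of `π` lying in block `i`. -/
noncomputable def fixInBlock {k : ℕ} (a : Fin k → ℕ) (i : Fin k)
    (π : Equiv.Perm (Fin (∑ t, a t))) : ℕ :=
  Nat.card {x : ℕ // inBlock a i x ∧ appl π x = x}

namespace DBFP

def dmap (f j : ℕ) : ℕ := if j < f then j else j + 1
def umap (f x : ℕ) : ℕ := if x < f then x else x - 1

lemma umap_dmap (f j : ℕ) : umap f (dmap f j) = j := by
  unfold dmap umap; split_ifs <;> omega

lemma dmap_umap {f x : ℕ} (h : x ≠ f) : dmap f (umap f x) = x := by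
  unfold dmap umap; split_ifs <;> omega

lemma dmap_ne (f j : ℕ) : dmap f j ≠ f := by
  unfold dmap; split_ifs <;> omega

lemma dmap_strictMono {f j j' : ℕ} (h : j < j') : dmap f j < dmap f j' := by
  unfold dmap; split_ifs <;> omega

lemma umap_lt_umap {f x y : ℕ} (h : x < y) (hx : x ≠ f) (hy : y ≠ f) :
    umap f x < umap f y := by
  unfold umap; split_ifs <;> omega

lemma appl_lt {n : ℕ} (π : Equiv.Perm (Fin n)) {x : ℕ} (h : x < n) : appl π x < n := by
  unfold appl; rw [dif_pos h]; exact (π _).isLt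

lemma appl_inv_appl {n : ℕ} (π : Equiv.Perm (Fin n)) (x : ℕ) :
    appl π⁻¹ (appl π x) = x := by
  unfold appl
  split_ifs with h1 h2 <;> simp_all

lemma appl_appl_inv {n : ℕ} (π : Equiv.Perm (Fin n)) (x : ℕ) :
    appl π (appl π⁻¹ x) = x := by
  have := appl_inv_appl π⁻¹ x
  simpa using this

lemma appl_injective {n : ℕ} (π : Equiv.Perm (Fin n)) : Function.Injective (appl π) := by
  intro x y h
  have := congrArg (appl π⁻¹) h
  rwa [appl_inv_appl, appl_inv_appl] at this

lemma appl_inv_fix {n : ℕ} {π : Equiv.Perm (Fin n)} {f : ℕ} (h : appl π f = f) :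
    appl π⁻¹ f = f := by
  conv_lhs => rw [← h]
  rw [appl_inv_appl]

lemma appl_ne_fix {n : ℕ} {π : Equiv.Perm (Fin n)} {f x : ℕ} (hfix : appl π f = f)
    (hx : x ≠ f) : appl π x ≠ f := by
  intro he
  exact hx (appl_injective π (he.trans hfix.symm))

lemma perm_ext_of_appl {n : ℕ} {π₁ π₂ : Equiv.Perm (Fin n)}
    (h : ∀ x, appl π₁ x = appl π₂ x) : π₁ = π₂ := by
  apply Equiv.ext; intro x
  have hx := h x
  unfold appl at hx
  rw [dif_pos x.isLt, dif_pos x.isLt] at hx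
  apply Fin.ext
  simpa using hx

/-- value function of the forward (point-removing) permutation -/
def fwdVal {n : ℕ} (f : ℕ) (π : Equiv.Perm (Fin n)) (j : ℕ) : ℕ :=
  umap f (appl π (dmap f j))

lemma fwdVal_lt {n n' : ℕ} (hn : n = n' + 1) {f : ℕ} (hf : f < n)
    (π : Equiv.Perm (Fin n)) (hfix : appl π f = f) {j : ℕ} (hj : j < n') :
    fwdVal f π j < n' := by
  have h1 : dmap f j < n := by unfold dmap; split_ifs <;> omega
  have h2 : appl π (dmap f j) < n := appl_lt π h1
  have h3 : appl π (dmap f j) ≠ f := appl_ne_fix hfix (dmap_ne f j)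
  unfold fwdVal umap; split_ifs <;> omega

lemma fwdVal_inv {n : ℕ} {f : ℕ} {π : Equiv.Perm (Fin n)} (hfix : appl π f = f) (j : ℕ) :
    fwdVal f π⁻¹ (fwdVal f π j) = j := by
  unfold fwdVal
  rw [dmap_umap (appl_ne_fix hfix (dmap_ne f _)), appl_inv_appl, umap_dmap]

def fwdPerm {n n' : ℕ} (hn : n = n' + 1) (f : ℕ) (hf : f < n) (π : Equiv.Perm (Fin n))
    (hfix : appl π f = f) : Equiv.Perm (Fin n') where
  toFun j := ⟨fwdVal f π j, fwdVal_lt hn hf π hfix j.isLt⟩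
  invFun j := ⟨fwdVal f π⁻¹ j, fwdVal_lt hn hf π⁻¹ (appl_inv_fix hfix) j.isLt⟩
  left_inv j := Fin.ext (fwdVal_inv hfix j)
  right_inv j := Fin.ext (by
    have := fwdVal_inv (π := π⁻¹) (appl_inv_fix hfix) (j : ℕ)
    simpa using this)

lemma appl_fwdPerm {n n' : ℕ} (hn : n = n' + 1) (f : ℕ) (hf : f < n)
    (π : Equiv.Perm (Fin n)) (hfix : appl π f = f) {j : ℕ} (hj : j < n') :
    appl (fwdPerm hn f hf π hfix) j = fwdVal f π j := by
  rw [appl, dif_pos hj]; rfl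

/-- value function of the backward (point-inserting) permutation -/
def bwdVal {n' : ℕ} (f : ℕ) (π' : Equiv.Perm (Fin n')) (x : ℕ) : ℕ :=
  if x = f then f else dmap f (appl π' (umap f x))

lemma bwdVal_lt {n n' : ℕ} (hn : n = n' + 1) {f : ℕ} (hf : f < n)
    (π' : Equiv.Perm (Fin n')) {x : ℕ} (hx : x < n) :
    bwdVal f π' x < n := by
  unfold bwdVal
  split_ifs with h
  · exact hf
  · have h1 : umap f x < n' := by unfold umap; split_ifs <;> omega
    have h2 : appl π' (umap f x) < n' := appl_lt π' h1
    unfold dmap; split_ifs <;> omega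

lemma bwdVal_inv {n' : ℕ} {f : ℕ} (π' : Equiv.Perm (Fin n')) (x : ℕ) :
    bwdVal f π'⁻¹ (bwdVal f π' x) = x := by
  unfold bwdVal
  by_cases h : x = f
  · simp [h]
  · rw [if_neg h, if_neg (dmap_ne f _), umap_dmap, appl_inv_appl, dmap_umap h]

def bwdPerm {n n' : ℕ} (hn : n = n' + 1) (f : ℕ) (hf : f < n)
    (π' : Equiv.Perm (Fin n')) : Equiv.Perm (Fin n) where
  toFun x := ⟨bwdVal f π' x, bwdVal_lt hn hf π' x.isLt⟩
  invFun x := ⟨bwdVal f π'⁻¹ x, bwdVal_lt hn hf π'⁻¹ x.isLt⟩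
  left_inv x := Fin.ext (bwdVal_inv π' x)
  right_inv x := Fin.ext (by
    have := bwdVal_inv (f := f) π'⁻¹ (x : ℕ)
    simpa using this)

lemma appl_bwdPerm {n n' : ℕ} (hn : n = n' + 1) (f : ℕ) (hf : f < n)
    (π' : Equiv.Perm (Fin n')) {x : ℕ} (hx : x < n) :
    appl (bwdPerm hn f hf π') x = bwdVal f π' x := by
  rw [appl, dif_pos hx]; rfl

end DBFP

namespace DBFP

lemma blockStart_add_le {k : ℕ} (a : Fin k → ℕ) {t i : Fin k} (h : t < i) :
    blockStart a t + a t ≤ blockStart a i := by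
  unfold blockStart
  have h1 : ∑ s ∈ Finset.Iio t, a s + a t = ∑ s ∈ Finset.Iic t, a s := by
    rw [← Finset.Iio_insert, Finset.sum_insert (by simp)]
    ring
  rw [h1]
  exact Finset.sum_le_sum_of_subset (fun x hx => by
    simp only [Finset.mem_Iic] at hx
    simp only [Finset.mem_Iio]
    exact lt_of_le_of_lt hx h)

lemma blockStart_add_le_sum {k : ℕ} (a : Fin k → ℕ) (i : Fin k) :
    blockStart a i + a i ≤ ∑ t, a t := by
  unfold blockStart
  have h1 : ∑ s ∈ Finset.Iio i, a s + a i = ∑ s ∈ Finset.Iic i, a s := by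
    rw [← Finset.Iio_insert, Finset.sum_insert (by simp)]
    ring
  rw [h1]
  exact Finset.sum_le_sum_of_subset (fun x _ => Finset.mem_univ x)

lemma inBlock_eq {k : ℕ} {a : Fin k → ℕ} {t s : Fin k} {x : ℕ}
    (ht : inBlock a t x) (hs : inBlock a s x) : t = s := by
  rcases lt_trichotomy t s with h | h | h
  · have := blockStart_add_le a h
    exact absurd (lt_of_lt_of_le ht.2 (this.trans hs.1)) (lt_irrefl x)
  · exact h
  · have := blockStart_add_le a h
    exact absurd (lt_of_lt_of_le hs.2 (this.trans ht.1)) (lt_irrefl x)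

lemma sum_update {k : ℕ} (a : Fin k → ℕ) (i : Fin k) (ha : 1 ≤ a i) :
    ∑ t, a t = (∑ t, Function.update a i (a i - 1) t) + 1 := by
  classical
  rw [Finset.sum_update_of_mem (Finset.mem_univ i),
    Finset.sum_eq_add_sum_sdiff_singleton_of_mem (Finset.mem_univ i) a]
  omega

lemma blockStart_update_of_le {k : ℕ} (a : Fin k → ℕ) {i t : Fin k} (h : t ≤ i) :
    blockStart (Function.update a i (a i - 1)) t = blockStart a t := by
  classical
  unfold blockStart
  refine Finset.sum_congr rfl fun s hs => ?_
  simp only [Finset.mem_Iio] at hs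
  exact Function.update_of_ne (ne_of_lt (lt_of_lt_of_le hs h)) _ _

lemma blockStart_update_of_gt {k : ℕ} (a : Fin k → ℕ) {i t : Fin k} (h : i < t)
    (ha : 1 ≤ a i) :
    blockStart (Function.update a i (a i - 1)) t + 1 = blockStart a t := by
  classical
  unfold blockStart
  rw [Finset.sum_update_of_mem (by simpa using h),
    Finset.sum_eq_add_sum_sdiff_singleton_of_mem (s := Finset.Iio t) (by simpa using h) a]
  omega

lemma chainAnti {k : ℕ} {a : Fin k → ℕ} {S : Finset (Fin k)} {i : Fin k}
    {π : Equiv.Perm (Fin (∑ t, a t))} (hπ : IsASPerm a S π) (hi : i ∈ S) :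
    ∀ y x, blockStart a i ≤ x → y < blockStart a i + a i → x < y →
      appl π y < appl π x := by
  intro y
  induction y with
  | zero => intro x _ _ h; omega
  | succ m ih =>
    intro x hx hy hxy
    have hm : blockStart a i ≤ m := le_trans hx (by omega)
    have h1 := hπ i m hm hy
    rw [if_pos hi] at h1
    rcases eq_or_lt_of_le (Nat.lt_succ_iff.mp hxy) with h | h
    · exact h ▸ h1
    · exact h1.trans (ih x hx (by omega) h)

end DBFP

namespace DBFP

lemma bwdVal_self {n' : ℕ} (f : ℕ) (π' : Equiv.Perm (Fin n')) : bwdVal f π' f = f := by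
  unfold bwdVal; rw [if_pos rfl]

lemma bwdVal_of_ne {n' : ℕ} {f x : ℕ} (π' : Equiv.Perm (Fin n')) (h : x ≠ f) :
    bwdVal f π' x = dmap f (appl π' (umap f x)) := by
  unfold bwdVal; rw [if_neg h]

lemma appl_of_ge {n : ℕ} (π : Equiv.Perm (Fin n)) {x : ℕ} (h : n ≤ x) : appl π x = x := by
  unfold appl; rw [dif_neg (by omega)]

lemma dmap_inBlock {k : ℕ} {a : Fin k → ℕ} {i : Fin k} (ha : 1 ≤ a i) {f : ℕ}
    (hfb : blockStart a i ≤ f) (hfu : f < blockStart a i + a i)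
    {t : Fin k} {x : ℕ} (hx : inBlock (Function.update a i (a i - 1)) t x) :
    inBlock a t (dmap f x) := by
  classical
  obtain ⟨hx1, hx2⟩ := hx
  rcases lt_trichotomy t i with h | h | h
  · have hbs := blockStart_update_of_le a (le_of_lt h)
    have hat : Function.update a i (a i - 1) t = a t := Function.update_of_ne (ne_of_lt h) _ _
    have hle := blockStart_add_le a h
    unfold inBlock dmap; split_ifs <;> omega
  · subst h
    have hbs := blockStart_update_of_le a (le_refl t)
    have hat : Function.update a t (a t - 1) t = a t - 1 := Function.update_self _ _ _
    unfold inBlock dmap; split_ifs <;> omega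
  · have hbs := blockStart_update_of_gt a h ha
    have hat : Function.update a i (a i - 1) t = a t := Function.update_of_ne (ne_of_gt h) _ _
    have hle := blockStart_add_le a h
    unfold inBlock dmap; split_ifs <;> omega

lemma umap_inBlock {k : ℕ} {a : Fin k → ℕ} {i : Fin k} (ha : 1 ≤ a i) {f : ℕ}
    (hfb : blockStart a i ≤ f) (hfu : f < blockStart a i + a i)
    {t : Fin k} {x : ℕ} (hx : inBlock a t x) (hxf : x ≠ f) :
    inBlock (Function.update a i (a i - 1)) t (umap f x) := by
  classical
  obtain ⟨hx1, hx2⟩ := hx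
  rcases lt_trichotomy t i with h | h | h
  · have hbs := blockStart_update_of_le a (le_of_lt h)
    have hat : Function.update a i (a i - 1) t = a t := Function.update_of_ne (ne_of_lt h) _ _
    have hle := blockStart_add_le a h
    unfold inBlock umap; split_ifs <;> omega
  · subst h
    have hbs := blockStart_update_of_le a (le_refl t)
    have hat : Function.update a t (a t - 1) t = a t - 1 := Function.update_self _ _ _
    unfold inBlock umap; split_ifs <;> omega
  · have hbs := blockStart_update_of_gt a h ha
    have hat : Function.update a i (a i - 1) t = a t := Function.update_of_ne (ne_of_gt h) _ _
    have hle := blockStart_add_le a h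
    unfold inBlock umap; split_ifs <;> omega

lemma fwd_isAS {k : ℕ} {a : Fin k → ℕ} {S : Finset (Fin k)} {i : Fin k}
    (hn : ∑ t, a t = (∑ t, Function.update a i (a i - 1) t) + 1)
    (ha : 1 ≤ a i) (hi : i ∈ S)
    {π : Equiv.Perm (Fin (∑ t, a t))} (hπ : IsASPerm a S π)
    {f : ℕ} (hf : f < ∑ t, a t)
    (hfb : blockStart a i ≤ f) (hfu : f < blockStart a i + a i)
    (hfix : appl π f = f) :
    IsASPerm (Function.update a i (a i - 1)) S (fwdPerm hn f hf π hfix) := by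
  classical
  intro t j h1 h2
  have hxj : inBlock (Function.update a i (a i - 1)) t j := ⟨h1, by omega⟩
  have hxj1 : inBlock (Function.update a i (a i - 1)) t (j + 1) := ⟨by omega, h2⟩
  have hdj := dmap_inBlock ha hfb hfu hxj
  have hdj1 := dmap_inBlock ha hfb hfu hxj1
  have hsum' := blockStart_add_le_sum (Function.update a i (a i - 1)) t
  have hjn : j < ∑ t, Function.update a i (a i - 1) t := by omega
  have hj1n : j + 1 < ∑ t, Function.update a i (a i - 1) t := by omega
  rw [appl_fwdPerm hn f hf π hfix hjn, appl_fwdPerm hn f hf π hfix hj1n]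
  have hne1 : appl π (dmap f j) ≠ f := appl_ne_fix hfix (dmap_ne f j)
  have hne2 : appl π (dmap f (j + 1)) ≠ f := appl_ne_fix hfix (dmap_ne f (j + 1))
  by_cases hcons : dmap f (j + 1) = dmap f j + 1
  · have hcomp := hπ t (dmap f j) hdj.1 (by rw [← hcons]; exact hdj1.2)
    unfold fwdVal
    split_ifs with ht
    · rw [if_pos ht, ← hcons] at hcomp
      exact umap_lt_umap hcomp hne2 hne1
    · rw [if_neg ht, ← hcons] at hcomp
      exact umap_lt_umap hcomp hne1 hne2
  · have hfj : f = j + 1 := by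
      unfold dmap at hcons; split_ifs at hcons <;> omega
    have hd1 : dmap f j = j := by unfold dmap; rw [if_pos (by omega)]
    have hd2 : dmap f (j + 1) = j + 2 := by unfold dmap; rw [if_neg (by omega)]
    rw [hd1] at hdj; rw [hd2] at hdj1
    obtain ⟨hdja, hdjb⟩ := hdj
    obtain ⟨hdj1a, hdj1b⟩ := hdj1
    have hti : t = i := inBlock_eq (⟨by omega, by omega⟩ : inBlock a t f) ⟨hfb, hfu⟩
    subst hti
    rw [if_pos hi]
    have c1 := hπ t j (by omega) (by omega)
    have c2 := hπ t (j + 1) (by omega) (by omega)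
    rw [if_pos hi] at c1 c2
    unfold fwdVal
    rw [hd1, hd2]
    exact umap_lt_umap (c2.trans c1) (hd2 ▸ hne2) (hd1 ▸ hne1)

lemma fwd_B' {k : ℕ} {a : Fin k → ℕ} {S : Finset (Fin k)} {i : Fin k}
    (hn : ∑ t, a t = (∑ t, Function.update a i (a i - 1) t) + 1) (hi : i ∈ S)
    {π : Equiv.Perm (Fin (∑ t, a t))} (hπ : IsASPerm a S π)
    {f : ℕ} (hf : f < ∑ t, a t)
    (hfb : blockStart a i ≤ f) (hfu : f < blockStart a i + a i)
    (hfix : appl π f = f) {j : ℕ} (hj1 : blockStart a i ≤ j) (hj2 : j < f) :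
    f ≤ appl (fwdPerm hn f hf π hfix) j := by
  have hjn : j < ∑ t, Function.update a i (a i - 1) t := by omega
  rw [appl_fwdPerm hn f hf π hfix hjn]
  unfold fwdVal
  have hd : dmap f j = j := by unfold dmap; rw [if_pos hj2]
  rw [hd]
  have hchain := chainAnti hπ hi f j hj1 hfu hj2
  rw [hfix] at hchain
  unfold umap; split_ifs <;> omega

lemma fwd_C' {k : ℕ} {a : Fin k → ℕ} {S : Finset (Fin k)} {i : Fin k}
    (hn : ∑ t, a t = (∑ t, Function.update a i (a i - 1) t) + 1) (hi : i ∈ S)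
    {π : Equiv.Perm (Fin (∑ t, a t))} (hπ : IsASPerm a S π)
    {f : ℕ} (hf : f < ∑ t, a t)
    (hfb : blockStart a i ≤ f) (hfu : f < blockStart a i + a i)
    (hfix : appl π f = f) {j : ℕ} (hj1 : f ≤ j) (hj2 : j + 1 < blockStart a i + a i) :
    appl (fwdPerm hn f hf π hfix) j < f := by
  have hsum := blockStart_add_le_sum a i
  have hjn : j < ∑ t, Function.update a i (a i - 1) t := by omega
  rw [appl_fwdPerm hn f hf π hfix hjn]
  unfold fwdVal
  have hd : dmap f j = j + 1 := by unfold dmap; rw [if_neg (by omega)]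
  rw [hd]
  have hchain := chainAnti hπ hi (j + 1) f hfb hj2 (by omega)
  rw [hfix] at hchain
  unfold umap; split_ifs <;> omega

lemma fwd_fix0 {k : ℕ} {a : Fin k → ℕ} {S : Finset (Fin k)} {i : Fin k}
    (hn : ∑ t, a t = (∑ t, Function.update a i (a i - 1) t) + 1)
    (ha : 1 ≤ a i) (hi : i ∈ S)
    {π : Equiv.Perm (Fin (∑ t, a t))} (hπ : IsASPerm a S π)
    {f : ℕ} (hf : f < ∑ t, a t)
    (hfb : blockStart a i ≤ f) (hfu : f < blockStart a i + a i)
    (hfix : appl π f = f) :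
    fixInBlock (Function.update a i (a i - 1)) i (fwdPerm hn f hf π hfix) = 0 := by
  classical
  have hbs := blockStart_update_of_le a (le_refl i)
  have hai : Function.update a i (a i - 1) i = a i - 1 := Function.update_self _ _ _
  have hE : IsEmpty {x : ℕ // inBlock (Function.update a i (a i - 1)) i x ∧
      appl (fwdPerm hn f hf π hfix) x = x} := by
    constructor
    rintro ⟨x, ⟨hx1, hx2⟩, hfx⟩
    rw [hbs] at hx1
    rw [hbs, hai] at hx2
    rcases lt_or_ge x f with h | h
    · have := fwd_B' hn hi hπ hf hfb hfu hfix hx1 h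
      omega
    · have := fwd_C' hn hi hπ hf hfb hfu hfix h (by omega)
      omega
  unfold fixInBlock
  exact Nat.card_of_isEmpty

lemma bwd_isAS {k : ℕ} {a : Fin k → ℕ} {S : Finset (Fin k)} {i : Fin k}
    (hn : ∑ t, a t = (∑ t, Function.update a i (a i - 1) t) + 1)
    (ha : 1 ≤ a i) (hi : i ∈ S)
    {π' : Equiv.Perm (Fin (∑ t, Function.update a i (a i - 1) t))}
    (hπ' : IsASPerm (Function.update a i (a i - 1)) S π')
    {f : ℕ} (hf : f < ∑ t, a t)
    (hfb : blockStart a i ≤ f) (hfu : f < blockStart a i + a i)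
    (hB : ∀ x, blockStart a i ≤ x → x < f → f ≤ appl π' x)
    (hC : ∀ x, f ≤ x → x + 1 < blockStart a i + a i → appl π' x < f) :
    IsASPerm a S (bwdPerm hn f hf π') := by
  classical
  intro t x h1 h2
  have hsum := blockStart_add_le_sum a t
  have hxn : x < ∑ t, a t := by omega
  have hx1n : x + 1 < ∑ t, a t := by omega
  rw [appl_bwdPerm hn f hf π' hxn, appl_bwdPerm hn f hf π' hx1n]
  by_cases hxf : x = f
  · subst hxf
    have hti : t = i := inBlock_eq (⟨h1, by omega⟩ : inBlock a t x) ⟨hfb, hfu⟩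
    subst hti
    rw [if_pos hi]
    have hc := hC x le_rfl h2
    rw [bwdVal_self, bwdVal_of_ne π' (by omega : x + 1 ≠ x)]
    have e2 : umap x (x + 1) = x := by unfold umap; split_ifs <;> omega
    rw [e2]
    have hd : dmap x (appl π' x) = appl π' x := by unfold dmap; rw [if_pos hc]
    omega
  · by_cases hx1f : x + 1 = f
    · have hti : t = i := inBlock_eq (⟨by omega, by omega⟩ : inBlock a t f) ⟨hfb, hfu⟩
      subst hti
      rw [if_pos hi]
      have hb := hB x h1 (by omega)
      rw [bwdVal_of_ne π' hxf, hx1f, bwdVal_self]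
      have e1 : umap f x = x := by unfold umap; rw [if_pos (by omega)]
      rw [e1]
      have hd : dmap f (appl π' x) = appl π' x + 1 := by unfold dmap; rw [if_neg (by omega)]
      omega
    · have hu : umap f (x + 1) = umap f x + 1 := by unfold umap; split_ifs <;> omega
      have hbx : inBlock a t x := ⟨h1, by omega⟩
      have hbx1 : inBlock a t (x + 1) := ⟨by omega, h2⟩
      have hub := umap_inBlock ha hfb hfu hbx hxf
      have hub1 := umap_inBlock ha hfb hfu hbx1 hx1f
      have hcomp := hπ' t (umap f x) hub.1 (by rw [← hu]; exact hub1.2)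
      rw [bwdVal_of_ne π' hxf, bwdVal_of_ne π' hx1f, hu]
      split_ifs with ht
      · rw [if_pos ht] at hcomp
        exact dmap_strictMono hcomp
      · rw [if_neg ht] at hcomp
        exact dmap_strictMono hcomp

lemma bwd_fix_unique {k : ℕ} {a : Fin k → ℕ} {i : Fin k}
    (hn : ∑ t, a t = (∑ t, Function.update a i (a i - 1) t) + 1)
    {π' : Equiv.Perm (Fin (∑ t, Function.update a i (a i - 1) t))}
    {f : ℕ} (hf : f < ∑ t, a t)
    (hfb : blockStart a i ≤ f) (hfu : f < blockStart a i + a i)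
    (hB : ∀ x, blockStart a i ≤ x → x < f → f ≤ appl π' x)
    (hC : ∀ x, f ≤ x → x + 1 < blockStart a i + a i → appl π' x < f)
    {z : ℕ} (hz : inBlock a i z) (hfz : appl (bwdPerm hn f hf π') z = z) : z = f := by
  by_contra hzf
  obtain ⟨hz1, hz2⟩ := hz
  have hzn : z < ∑ t, a t := lt_of_lt_of_le hz2 (blockStart_add_le_sum a i)
  rw [appl_bwdPerm hn f hf π' hzn, bwdVal_of_ne π' hzf] at hfz
  rcases lt_or_gt_of_ne hzf with h | h
  · have hb := hB z hz1 h
    have e1 : umap f z = z := by unfold umap; rw [if_pos h]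
    rw [e1] at hfz
    have hd : dmap f (appl π' z) = appl π' z + 1 := by unfold dmap; rw [if_neg (by omega)]
    omega
  · have e1 : umap f z = z - 1 := by unfold umap; rw [if_neg (by omega)]
    have hc := hC (z - 1) (by omega) (by omega)
    rw [e1] at hfz
    have hd : dmap f (appl π' (z - 1)) = appl π' (z - 1) := by unfold dmap; rw [if_pos hc]
    omega

lemma bwd_fix1 {k : ℕ} {a : Fin k → ℕ} {i : Fin k}
    (hn : ∑ t, a t = (∑ t, Function.update a i (a i - 1) t) + 1)
    {π' : Equiv.Perm (Fin (∑ t, Function.update a i (a i - 1) t))}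
    {f : ℕ} (hf : f < ∑ t, a t)
    (hfb : blockStart a i ≤ f) (hfu : f < blockStart a i + a i)
    (hB : ∀ x, blockStart a i ≤ x → x < f → f ≤ appl π' x)
    (hC : ∀ x, f ≤ x → x + 1 < blockStart a i + a i → appl π' x < f) :
    fixInBlock a i (bwdPerm hn f hf π') = 1 := by
  unfold fixInBlock
  rw [Nat.card_eq_one_iff_unique]
  constructor
  · constructor
    rintro ⟨x, hx, hfx⟩ ⟨y, hy, hfy⟩
    have e1 := bwd_fix_unique hn hf hfb hfu hB hC hx hfx
    have e2 := bwd_fix_unique hn hf hfb hfu hB hC hy hfy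
    exact Subtype.ext (e1.trans e2.symm)
  · refine ⟨⟨f, ⟨hfb, hfu⟩, ?_⟩⟩
    rw [appl_bwdPerm hn f hf π' hf, bwdVal_self]

lemma threshold_exists {k : ℕ} {a : Fin k → ℕ} {S : Finset (Fin k)} {i : Fin k}
    (hn : ∑ t, a t = (∑ t, Function.update a i (a i - 1) t) + 1)
    (ha : 1 ≤ a i) (hi : i ∈ S)
    {π' : Equiv.Perm (Fin (∑ t, Function.update a i (a i - 1) t))}
    (hπ' : IsASPerm (Function.update a i (a i - 1)) S π')
    (h0 : fixInBlock (Function.update a i (a i - 1)) i π' = 0) :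
    ∃ f, blockStart a i ≤ f ∧ f < blockStart a i + a i ∧
      (∀ x, blockStart a i ≤ x → x < f → f ≤ appl π' x) ∧
      (∀ x, f ≤ x → x + 1 < blockStart a i + a i → appl π' x < f) := by
  classical
  have hbs := blockStart_update_of_le a (le_refl i)
  have hai : Function.update a i (a i - 1) i = a i - 1 := Function.update_self _ _ _
  -- no fixed points
  have hfin : Finite {x : ℕ // inBlock (Function.update a i (a i - 1)) i x ∧ appl π' x = x} := by
    apply Finite.of_injective (fun z =>
      (⟨z.1, z.2.1.2⟩ : Fin (blockStart (Function.update a i (a i - 1)) i +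
        Function.update a i (a i - 1) i)))
    intro z w hzw
    exact Subtype.ext (congrArg Fin.val hzw)
  have hempty : IsEmpty {x : ℕ // inBlock (Function.update a i (a i - 1)) i x ∧ appl π' x = x} := by
    unfold fixInBlock at h0
    rcases Nat.card_eq_zero.mp h0 with h | h
    · exact h
    · exact (@not_finite _ h hfin).elim
  have hnofix : ∀ x, inBlock (Function.update a i (a i - 1)) i x → appl π' x ≠ x :=
    fun x hx he => hempty.false ⟨x, hx, he⟩
  have chain := chainAnti hπ' hi
  rw [hbs, hai] at chain
  set M := (Finset.Ico (blockStart a i) (blockStart a i + (a i - 1))).filter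
    (fun j => appl π' j < j) with hM
  set f := if h : M.Nonempty then M.min' h else blockStart a i + (a i - 1) with hfdef
  have hfIco : blockStart a i ≤ f ∧ f ≤ blockStart a i + (a i - 1) := by
    rw [hfdef]; split_ifs with h
    · have hm := M.min'_mem h
      have hm2 := Finset.mem_filter.mp hm
      have hm3 := Finset.mem_Ico.mp hm2.1
      omega
    · omega
  have hnotM : ∀ y, blockStart a i ≤ y → y < f → y < appl π' y := by
    intro y hy hyf
    have hyM : y ∉ M := by
      rw [hfdef] at hyf
      by_cases h : M.Nonempty
      · rw [dif_pos h] at hyf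
        intro hmem
        exact absurd (M.min'_le y hmem) (by omega)
      · rw [Finset.not_nonempty_iff_eq_empty.mp h]
        exact Finset.notMem_empty y
    have hyblk : y < blockStart a i + (a i - 1) := by omega
    have hne := hnofix y ⟨by omega, by omega⟩
    have hyM2 : ¬(appl π' y < y) := fun hlt =>
      hyM (Finset.mem_filter.mpr ⟨Finset.mem_Ico.mpr ⟨hy, hyblk⟩, hlt⟩)
    omega
  refine ⟨f, hfIco.1, by omega, ?_, ?_⟩
  · intro x hx hxf
    by_cases hx1 : x + 1 = f
    · have := hnotM x hx hxf
      omega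
    · have h1 := hnotM (f - 1) (by omega) (by omega)
      have h2 := chain (f - 1) x hx (by omega) (by omega)
      omega
  · intro x hx hx1
    have hMne : M.Nonempty := by
      rw [hfdef] at hx
      by_cases h : M.Nonempty
      · exact h
      · rw [dif_neg h] at hx
        omega
    have hfM : f ∈ M := by
      rw [hfdef, dif_pos hMne]
      exact M.min'_mem hMne
    have hfM2 := Finset.mem_filter.mp hfM
    have hfM3 := Finset.mem_Ico.mp hfM2.1
    rcases eq_or_lt_of_le hx with h | h
    · rw [← h]
      exact hfM2.2
    · have h2 := chain x f hfIco.1 (by omega) h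
      omega

lemma threshold_unique {k : ℕ} {a : Fin k → ℕ} {i : Fin k}
    {n' : ℕ} {π' : Equiv.Perm (Fin n')} {f g : ℕ}
    (hf1 : blockStart a i ≤ f) (hf2 : f < blockStart a i + a i)
    (hfB : ∀ x, blockStart a i ≤ x → x < f → f ≤ appl π' x)
    (hfC : ∀ x, f ≤ x → x + 1 < blockStart a i + a i → appl π' x < f)
    (hg1 : blockStart a i ≤ g) (hg2 : g < blockStart a i + a i)
    (hgB : ∀ x, blockStart a i ≤ x → x < g → g ≤ appl π' x)
    (hgC : ∀ x, g ≤ x → x + 1 < blockStart a i + a i → appl π' x < g) :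
    f = g := by
  by_contra h
  rcases lt_or_gt_of_ne h with hlt | hlt
  · have h1 := hgB f hf1 hlt
    have h2 := hfC f le_rfl (by omega)
    omega
  · have h1 := hfB g hg1 hlt
    have h2 := hgC g le_rfl (by omega)
    omega

lemma bwd_fwd {n n' : ℕ} (hn : n = n' + 1) {π : Equiv.Perm (Fin n)} {f g : ℕ}
    (hf : f < n) (hg : g < n) (hfix : appl π f = f) (hgf : g = f) :
    bwdPerm hn g hg (fwdPerm hn f hf π hfix) = π := by
  subst hgf
  apply perm_ext_of_appl
  intro x
  by_cases hx : x < n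
  · rw [appl_bwdPerm hn g hg _ hx]
    by_cases hxf : x = g
    · subst hxf
      rw [bwdVal_self, hfix]
    · rw [bwdVal_of_ne _ hxf]
      have hu : umap g x < n' := by unfold umap; split_ifs <;> omega
      rw [appl_fwdPerm hn g hf _ hfix hu]
      unfold fwdVal
      rw [dmap_umap hxf, dmap_umap (appl_ne_fix hfix hxf)]
  · rw [appl_of_ge _ (by omega), appl_of_ge _ (by omega)]

lemma fwd_bwd {n n' : ℕ} (hn : n = n' + 1) {π' : Equiv.Perm (Fin n')} {f g : ℕ}
    (hf : f < n) (hg : g < n) (hfix' : appl (bwdPerm hn f hf π') g = g)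
    (hgf : g = f) :
    fwdPerm hn g hg (bwdPerm hn f hf π') hfix' = π' := by
  subst hgf
  apply perm_ext_of_appl
  intro x
  by_cases hx : x < n'
  · rw [appl_fwdPerm hn g hg _ hfix' hx]
    unfold fwdVal
    have hd : dmap g x < n := by unfold dmap; split_ifs <;> omega
    rw [appl_bwdPerm hn g hg π' hd, bwdVal_of_ne _ (dmap_ne g x), umap_dmap, umap_dmap]
  · rw [appl_of_ge _ (by omega), appl_of_ge _ (by omega)]

end DBFP

/-- For `i ∈ S` (a descending block), there is a bijection between
`(a₁,…,aᵢ,…,a_k,S)`-permutations with exactly one fixed point in `Aᵢ` and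
`(a₁,…,aᵢ-1,…,a_k,S)`-permutations with no fixed points in `Aᵢ`. -/
theorem descending_block_fixed_point_bijection (k : ℕ) (a : Fin k → ℕ)
    (S : Finset (Fin k)) (i : Fin k) (hi : i ∈ S) (ha : 1 ≤ a i) :
    Nonempty
      ({π : Equiv.Perm (Fin (∑ t, a t)) // IsASPerm a S π ∧ fixInBlock a i π = 1} ≃
       {π : Equiv.Perm (Fin (∑ t, Function.update a i (a i - 1) t)) //
          IsASPerm (Function.update a i (a i - 1)) S π ∧
          fixInBlock (Function.update a i (a i - 1)) i π = 0}) := by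
  classical
  have hn : ∑ t, a t = (∑ t, Function.update a i (a i - 1) t) + 1 := DBFP.sum_update a i ha
  have hexF : ∀ (π : Equiv.Perm (Fin (∑ t, a t))), fixInBlock a i π = 1 →
      ∃ f, (inBlock a i f ∧ appl π f = f) ∧
        ∀ g, inBlock a i g → appl π g = g → g = f := by
    intro π h1
    unfold fixInBlock at h1
    obtain ⟨hsub, hne⟩ := Nat.card_eq_one_iff_unique.mp h1
    obtain ⟨⟨f, hf⟩⟩ := hne
    exact ⟨f, hf, fun g hg1 hg2 => congrArg Subtype.val (hsub.allEq ⟨g, hg1, hg2⟩ ⟨f, hf⟩)⟩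
  have hexG : ∀ (π' : Equiv.Perm (Fin (∑ t, Function.update a i (a i - 1) t))),
      IsASPerm (Function.update a i (a i - 1)) S π' →
      fixInBlock (Function.update a i (a i - 1)) i π' = 0 →
      ∃ f, blockStart a i ≤ f ∧ f < blockStart a i + a i ∧
        (∀ x, blockStart a i ≤ x → x < f → f ≤ appl π' x) ∧
        (∀ x, f ≤ x → x + 1 < blockStart a i + a i → appl π' x < f) :=
    fun π' h1 h2 => DBFP.threshold_exists hn ha hi h1 h2
  refine ⟨⟨
    fun p =>
      ⟨DBFP.fwdPerm hn (Classical.choose (hexF p.1 p.2.2))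
        (lt_of_lt_of_le (Classical.choose_spec (hexF p.1 p.2.2)).1.1.2
          (DBFP.blockStart_add_le_sum a i))
        p.1 (Classical.choose_spec (hexF p.1 p.2.2)).1.2,
       DBFP.fwd_isAS hn ha hi p.2.1 _
         (Classical.choose_spec (hexF p.1 p.2.2)).1.1.1
         (Classical.choose_spec (hexF p.1 p.2.2)).1.1.2
         (Classical.choose_spec (hexF p.1 p.2.2)).1.2,
       DBFP.fwd_fix0 hn ha hi p.2.1 _
         (Classical.choose_spec (hexF p.1 p.2.2)).1.1.1
         (Classical.choose_spec (hexF p.1 p.2.2)).1.1.2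
         (Classical.choose_spec (hexF p.1 p.2.2)).1.2⟩,
    fun q =>
      ⟨DBFP.bwdPerm hn (Classical.choose (hexG q.1 q.2.1 q.2.2))
        (lt_of_lt_of_le (Classical.choose_spec (hexG q.1 q.2.1 q.2.2)).2.1
          (DBFP.blockStart_add_le_sum a i)) q.1,
       DBFP.bwd_isAS hn ha hi q.2.1 _
         (Classical.choose_spec (hexG q.1 q.2.1 q.2.2)).1
         (Classical.choose_spec (hexG q.1 q.2.1 q.2.2)).2.1
         (Classical.choose_spec (hexG q.1 q.2.1 q.2.2)).2.2.1
         (Classical.choose_spec (hexG q.1 q.2.1 q.2.2)).2.2.2,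
       DBFP.bwd_fix1 hn _
         (Classical.choose_spec (hexG q.1 q.2.1 q.2.2)).1
         (Classical.choose_spec (hexG q.1 q.2.1 q.2.2)).2.1
         (Classical.choose_spec (hexG q.1 q.2.1 q.2.2)).2.2.1
         (Classical.choose_spec (hexG q.1 q.2.1 q.2.2)).2.2.2⟩,
    ?_, ?_⟩⟩
  · intro p
    apply Subtype.ext
    have hsF := Classical.choose_spec (hexF p.1 p.2.2)
    have hfb : blockStart a i ≤ Classical.choose (hexF p.1 p.2.2) := hsF.1.1.1
    have hfu : Classical.choose (hexF p.1 p.2.2) < blockStart a i + a i := hsF.1.1.2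
    have hfix : appl p.1 (Classical.choose (hexF p.1 p.2.2)) = Classical.choose (hexF p.1 p.2.2) :=
      hsF.1.2
    have hflt : Classical.choose (hexF p.1 p.2.2) < ∑ t, a t :=
      lt_of_lt_of_le hfu (DBFP.blockStart_add_le_sum a i)
    have hgs := Classical.choose_spec (hexG
      (DBFP.fwdPerm hn (Classical.choose (hexF p.1 p.2.2)) hflt p.1 hfix)
      (DBFP.fwd_isAS hn ha hi p.2.1 hflt hfb hfu hfix)
      (DBFP.fwd_fix0 hn ha hi p.2.1 hflt hfb hfu hfix))
    refine DBFP.bwd_fwd hn hflt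
      (lt_of_lt_of_le hgs.2.1 (DBFP.blockStart_add_le_sum a i)) hfix ?_
    exact DBFP.threshold_unique hgs.1 hgs.2.1 hgs.2.2.1 hgs.2.2.2
      hfb hfu
      (fun x hx1 hx2 => DBFP.fwd_B' hn hi p.2.1 hflt hfb hfu hfix hx1 hx2)
      (fun x hx1 hx2 => DBFP.fwd_C' hn hi p.2.1 hflt hfb hfu hfix hx1 hx2)
  · intro q
    apply Subtype.ext
    have hgs := Classical.choose_spec (hexG q.1 q.2.1 q.2.2)
    have hglt : Classical.choose (hexG q.1 q.2.1 q.2.2) < ∑ t, a t :=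
      lt_of_lt_of_le hgs.2.1 (DBFP.blockStart_add_le_sum a i)
    have hsF := Classical.choose_spec (hexF
      (DBFP.bwdPerm hn (Classical.choose (hexG q.1 q.2.1 q.2.2)) hglt q.1)
      (DBFP.bwd_fix1 hn hglt hgs.1 hgs.2.1 hgs.2.2.1 hgs.2.2.2))
    refine DBFP.fwd_bwd hn hglt
      (lt_of_lt_of_le hsF.1.1.2 (DBFP.blockStart_add_le_sum a i)) hsF.1.2 ?_
    exact DBFP.bwd_fix_unique hn hglt hgs.1 hgs.2.1 hgs.2.2.1 hgs.2.2.2 hsF.1.1 hsF.1.2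
end

section
/- For i ∉ S and 0 ≤ l ≤ p ≤ a_i, there is a bijection between (a_1,…,a_i,…,a_k,S)-permutations with exactly p fixed points in A_i and (a_1,…,a_i−l,…,a_k,S)-permutations with exactly p−l fixed points in A_i. -/
/-! ### contraction and dilation maps -/

def ct (s l x : ℕ) : ℕ := if x < s then x else x - l
def dl (s l x : ℕ) : ℕ := if x < s then x else x + l

theorem ct_dl (s l y : ℕ) : ct s l (dl s l y) = y := by
  unfold ct dl
  by_cases h : y < s
  · simp [h]
  · rw [if_neg h, if_neg (show ¬ y + l < s by omega)]; omega

theorem dl_ct (s l x : ℕ) (h : x < s ∨ s + l ≤ x) : dl s l (ct s l x) = x := by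
  unfold ct dl; rcases h with h | h
  · simp [h]
  · rw [if_neg (show ¬ x < s by omega), if_neg (show ¬ x - l < s by omega)]; omega

theorem dl_lt_dl (s l : ℕ) {y y' : ℕ} (h : y < y') : dl s l y < dl s l y' := by
  unfold dl; split <;> split <;> omega

theorem ct_lt_ct (s l : ℕ) {x x' : ℕ} (h : x < x') (h1 : x < s ∨ s + l ≤ x)
    (h2 : x' < s ∨ s + l ≤ x') : ct s l x < ct s l x' := by
  unfold ct; split <;> split <;> omega

theorem ct_le (s l x : ℕ) : ct s l x ≤ x := by unfold ct; split <;> omega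
theorem le_dl (s l x : ℕ) : x ≤ dl s l x := by unfold dl; split <;> omega
theorem dl_le (s l x : ℕ) : dl s l x ≤ x + l := by unfold dl; split <;> omega
theorem dl_not_patch (s l y : ℕ) : dl s l y < s ∨ s + l ≤ dl s l y := by
  unfold dl; split <;> omega
theorem dl_of_lt (s l y : ℕ) (h : y < s) : dl s l y = y := by unfold dl; simp [h]
theorem dl_of_ge (s l y : ℕ) (h : s ≤ y) : dl s l y = y + l := by
  unfold dl; rw [if_neg (by omega)]
theorem ct_of_lt (s l x : ℕ) (h : x < s) : ct s l x = x := by unfold ct; simp [h]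
theorem ct_of_ge (s l x : ℕ) (h : s ≤ x) : ct s l x = x - l := by
  unfold ct; rw [if_neg (by omega)]

/-! ### appl lemmas -/

theorem appl_lt_s10 {n : ℕ} (π : Equiv.Perm (Fin n)) {j : ℕ} (h : j < n) : appl π j < n := by
  unfold appl; rw [dif_pos h]; exact (π ⟨j, h⟩).isLt

theorem appl_of_ge_s10 {n : ℕ} (π : Equiv.Perm (Fin n)) {j : ℕ} (h : ¬ j < n) : appl π j = j := by
  unfold appl; rw [dif_neg h]

theorem appl_appl_inv {n : ℕ} (π : Equiv.Perm (Fin n)) (j : ℕ) :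
    appl π⁻¹ (appl π j) = j := by
  unfold appl
  by_cases h : j < n
  · rw [dif_pos h, dif_pos (π ⟨j, h⟩).isLt]
    simp
  · rw [dif_neg h, dif_neg h]

theorem appl_inj {n : ℕ} (π : Equiv.Perm (Fin n)) {x y : ℕ}
    (h : appl π x = appl π y) : x = y := by
  have := appl_appl_inv π x
  rw [h, appl_appl_inv] at this; exact this.symm

theorem appl_inv_fix {n : ℕ} (π : Equiv.Perm (Fin n)) {u : ℕ} (h : appl π u = u) :
    appl π⁻¹ u = u := by
  conv_lhs => rw [← h]
  exact appl_appl_inv π u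

/-! ### blockStart lemmas -/

theorem bs_add_le_sum {k : ℕ} (a : Fin k → ℕ) (i : Fin k) :
    blockStart a i + a i ≤ ∑ t, a t := by
  have h1 : blockStart a i + a i = ∑ t ∈ insert i (Finset.Iio i), a t := by
    rw [Finset.sum_insert (by simp), add_comm]; rfl
  rw [h1]
  exact Finset.sum_le_sum_of_subset (Finset.subset_univ _)

theorem bs_add_le {k : ℕ} (a : Fin k → ℕ) {j i : Fin k} (h : j < i) :
    blockStart a j + a j ≤ blockStart a i := by
  have h1 : blockStart a j + a j = ∑ t ∈ insert j (Finset.Iio j), a t := by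
    rw [Finset.sum_insert (by simp), add_comm]; rfl
  rw [h1]
  apply Finset.sum_le_sum_of_subset
  intro t ht
  simp only [Finset.mem_insert, Finset.mem_Iio] at *
  rcases ht with rfl | ht
  · exact h
  · exact ht.trans h

theorem bs_update_le {k : ℕ} (a : Fin k → ℕ) {i j : Fin k} (v : ℕ) (h : j ≤ i) :
    blockStart (Function.update a i v) j = blockStart a j := by
  unfold blockStart
  apply Finset.sum_congr rfl
  intro t ht
  simp only [Finset.mem_Iio] at ht
  exact Function.update_of_ne (ne_of_lt (lt_of_lt_of_le ht h)) v a

theorem bs_update_gt {k : ℕ} (a : Fin k → ℕ) {i j : Fin k} {l : ℕ} (hl : l ≤ a i)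
    (h : i < j) : blockStart (Function.update a i (a i - l)) j + l = blockStart a j := by
  unfold blockStart
  have hij : i ∈ Finset.Iio j := Finset.mem_Iio.mpr h
  rw [Finset.sum_update_of_mem hij]
  have h2 := Finset.sum_erase_add (Finset.Iio j) a hij
  have h3 : Finset.Iio j \ {i} = (Finset.Iio j).erase i := by
    ext; simp [Finset.mem_erase, and_comm]
  rw [h3]; omega

theorem sum_update {k : ℕ} (a : Fin k → ℕ) (i : Fin k) {l : ℕ} (hl : l ≤ a i) :
    (∑ t, Function.update a i (a i - l) t) + l = ∑ t, a t := by
  rw [Finset.sum_update_of_mem (Finset.mem_univ i)]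
  have h2 := Finset.sum_erase_add Finset.univ a (Finset.mem_univ i)
  have : Finset.univ \ {i} = Finset.univ.erase i := by
    ext; simp [Finset.mem_erase, and_comm]
  rw [this]; omega


/-! ### ascending-block monotonicity -/

section Asc

variable {k : ℕ} {a : Fin k → ℕ} {S : Finset (Fin k)} {i : Fin k}
  {π : Equiv.Perm (Fin (∑ t, a t))}

theorem asc_consec (hπ : IsASPerm a S π) (hi : i ∉ S) {j : ℕ}
    (h1 : blockStart a i ≤ j) (h2 : j + 1 < blockStart a i + a i) :
    appl π j < appl π (j + 1) := by
  have := hπ i j h1 h2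
  rwa [if_neg hi] at this

theorem asc_add (hπ : IsASPerm a S π) (hi : i ∉ S) {j : ℕ} (m : ℕ)
    (h1 : blockStart a i ≤ j) (h2 : j + m < blockStart a i + a i) :
    appl π j + m ≤ appl π (j + m) := by
  induction m with
  | zero => simp
  | succ m ih =>
    have hm : j + m < blockStart a i + a i := by omega
    have h3 := asc_consec hπ hi (show blockStart a i ≤ j + m by omega)
      (show j + m + 1 < blockStart a i + a i by omega)
    have := ih hm
    rw [show j + (m + 1) = j + m + 1 by omega]
    omega

theorem asc_lt (hπ : IsASPerm a S π) (hi : i ∉ S) {x y : ℕ}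
    (h1 : blockStart a i ≤ x) (h2 : y < blockStart a i + a i) (hxy : x < y) :
    appl π x < appl π y := by
  have := asc_add hπ hi (y - x) h1 (by omega)
  rw [show x + (y - x) = y by omega] at this
  omega

/-! ### the index `s` -/

noncomputable def sIdx {k : ℕ} (a : Fin k → ℕ) (i : Fin k) (π : Equiv.Perm (Fin (∑ t, a t))) : ℕ :=
  sInf ({x | inBlock a i x ∧ x ≤ appl π x} ∪ {blockStart a i + a i})

theorem sIdx_nonempty :
    ({x | inBlock a i x ∧ x ≤ appl π x} ∪ {blockStart a i + a i} : Set ℕ).Nonempty :=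
  ⟨blockStart a i + a i, Or.inr rfl⟩

theorem sIdx_mem : sIdx a i π ∈
    ({x | inBlock a i x ∧ x ≤ appl π x} ∪ {blockStart a i + a i} : Set ℕ) :=
  Nat.sInf_mem sIdx_nonempty

theorem sIdx_le : sIdx a i π ≤ blockStart a i + a i :=
  Nat.sInf_le (Or.inr rfl)

theorem bs_le_sIdx : blockStart a i ≤ sIdx a i π := by
  rcases sIdx_mem (a := a) (i := i) (π := π) with h | h
  · exact h.1.1
  · simp only [Set.mem_singleton_iff] at h
    omega

theorem sIdx_low {x : ℕ} (hx : inBlock a i x) (h : x < sIdx a i π) :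
    appl π x < x := by
  have := Nat.notMem_of_lt_sInf (show x < sInf _ from h)
  simp only [Set.mem_union, Set.mem_setOf_eq, Set.mem_singleton_iff, not_or] at this
  have h1 : ¬ (inBlock a i x ∧ x ≤ appl π x) := this.1
  by_contra hc
  exact h1 ⟨hx, by omega⟩

theorem sIdx_high (hπ : IsASPerm a S π) (hi : i ∉ S) {x : ℕ} (hx : inBlock a i x)
    (h : sIdx a i π ≤ x) : x ≤ appl π x := by
  rcases sIdx_mem (a := a) (i := i) (π := π) with hm | hm
  · obtain ⟨hb, hle⟩ := hm
    rcases eq_or_lt_of_le h with rfl | hlt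
    · exact hle
    · have hx2 := hx.2
      have := asc_add hπ hi (x - sIdx a i π) hb.1 (by omega)
      rw [show sIdx a i π + (x - sIdx a i π) = x by omega] at this
      omega
  · simp only [Set.mem_singleton_iff] at hm
    exfalso
    have := hx.2
    omega

end Asc

/-! ### fixed points form an interval -/

section Fix

variable {k : ℕ} {a : Fin k → ℕ} {S : Finset (Fin k)} {i : Fin k}
  {π : Equiv.Perm (Fin (∑ t, a t))}

noncomputable def fixF {k : ℕ} (a : Fin k → ℕ) (i : Fin k)
    (π : Equiv.Perm (Fin (∑ t, a t))) : Finset ℕ :=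
  (Finset.Ico (blockStart a i) (blockStart a i + a i)).filter (fun x => appl π x = x)

theorem mem_fixF {x : ℕ} : x ∈ fixF a i π ↔ inBlock a i x ∧ appl π x = x := by
  simp [fixF, Finset.mem_filter, Finset.mem_Ico, inBlock, and_assoc]

theorem fixInBlock_eq_card : fixInBlock a i π = (fixF a i π).card := by
  rw [fixInBlock, ← Nat.card_eq_finsetCard]
  exact Nat.card_congr (Equiv.subtypeEquivRight (fun x => mem_fixF.symm))

theorem fixF_eq (hπ : IsASPerm a S π) (hi : i ∉ S) :
    fixF a i π = Finset.Ico (sIdx a i π) (sIdx a i π + fixInBlock a i π) := by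
  rcases Finset.eq_empty_or_nonempty (fixF a i π) with he | hne
  · rw [he, fixInBlock_eq_card, he]
    simp
  · set s := sIdx a i π with hs
    set M := (fixF a i π).max' hne with hM
    have hMmem : M ∈ fixF a i π := Finset.max'_mem _ _
    have hMfix := mem_fixF.mp hMmem
    -- every fixed point is ≥ s, and s is fixed
    have hmin : ∀ x ∈ fixF a i π, s ≤ x := by
      intro x hx
      obtain ⟨hb, hfx⟩ := mem_fixF.mp hx
      by_contra hc
      have := sIdx_low (π := π) hb (show x < sIdx a i π by omega)
      omega
    have hsM : s ≤ M := hmin M hMmem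
    have hicc : fixF a i π = Finset.Icc s M := by
      apply Finset.ext
      intro y
      simp only [Finset.mem_Icc]
      constructor
      · intro hy
        exact ⟨hmin y hy, Finset.le_max' _ y hy⟩
      · rintro ⟨h1, h2⟩
        have hyb : inBlock a i y := by
          constructor
          · have := bs_le_sIdx (a := a) (i := i) (π := π)
            omega
          · have := hMfix.1.2
            omega
        apply mem_fixF.mpr
        refine ⟨hyb, ?_⟩
        have hge := sIdx_high hπ hi hyb h1
        rcases eq_or_lt_of_le h2 with rfl | hlt
        · exact hMfix.2
        · have := asc_add hπ hi (M - y) hyb.1 (by have := hMfix.1.2; omega)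
          rw [show y + (M - y) = M by omega] at this
          rw [hMfix.2] at this
          omega
    rw [fixInBlock_eq_card, hicc, Nat.card_Icc]
    apply Finset.ext
    intro y
    simp only [Finset.mem_Icc, Finset.mem_Ico]
    omega

theorem fix_of_mem (hπ : IsASPerm a S π) (hi : i ∉ S) {x : ℕ} (h1 : sIdx a i π ≤ x)
    (h2 : x < sIdx a i π + fixInBlock a i π) : appl π x = x := by
  have : x ∈ fixF a i π := by
    rw [fixF_eq hπ hi]
    simp only [Finset.mem_Ico]
    exact ⟨h1, h2⟩
  exact (mem_fixF.mp this).2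

theorem inBlock_of_fix_mem (hπ : IsASPerm a S π) (hi : i ∉ S) {x : ℕ} (h1 : sIdx a i π ≤ x)
    (h2 : x < sIdx a i π + fixInBlock a i π) : inBlock a i x := by
  have : x ∈ fixF a i π := by
    rw [fixF_eq hπ hi]; simp only [Finset.mem_Ico]; exact ⟨h1, h2⟩
  exact (mem_fixF.mp this).1

theorem sIdx_add_fix_le (hπ : IsASPerm a S π) (hi : i ∉ S) :
    sIdx a i π + fixInBlock a i π ≤ blockStart a i + a i := by
  rcases Nat.eq_zero_or_pos (fixInBlock a i π) with h0 | h0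
  · have := sIdx_le (a := a) (i := i) (π := π)
    omega
  · have := (inBlock_of_fix_mem hπ hi (x := sIdx a i π + fixInBlock a i π - 1)
      (by omega) (by omega)).2
    omega

theorem sIdx_strict_high (hπ : IsASPerm a S π) (hi : i ∉ S) {x : ℕ} (hx : inBlock a i x)
    (h : sIdx a i π + fixInBlock a i π ≤ x) : x < appl π x := by
  have hge := sIdx_high hπ hi hx (by omega)
  rcases eq_or_lt_of_le hge with heq | hlt
  · exfalso
    have : x ∈ fixF a i π := mem_fixF.mpr ⟨hx, heq.symm⟩
    rw [fixF_eq hπ hi] at this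
    simp only [Finset.mem_Ico] at this
    omega
  · exact hlt

end Fix

/-! ### deletion and insertion permutations -/

section DelIns

variable {N n' s l : ℕ}

theorem appl_inv_appl {N : ℕ} (π : Equiv.Perm (Fin N)) (j : ℕ) :
    appl π (appl π⁻¹ j) = j := by
  have := appl_appl_inv π⁻¹ j
  rwa [inv_inv] at this

theorem appl_not_patch (π : Equiv.Perm (Fin N))
    (hfix : ∀ u, s ≤ u → u < s + l → appl π u = u) {x : ℕ} (hx : x < s ∨ s + l ≤ x) :
    appl π x < s ∨ s + l ≤ appl π x := by
  by_contra hc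
  push_neg at hc
  have hfv : appl π (appl π x) = appl π x := hfix _ hc.1 hc.2
  have := appl_inj π hfv
  omega

theorem del_bound (π : Equiv.Perm (Fin N)) (hn : n' + l = N) (hsl : s + l ≤ N)
    (hfix : ∀ u, s ≤ u → u < s + l → appl π u = u) {y : ℕ} (hy : y < n') :
    ct s l (appl π (dl s l y)) < n' := by
  have hd : dl s l y < N := by have := dl_le s l y; omega
  have hv : appl π (dl s l y) < N := appl_lt_s10 π hd
  have hnp := appl_not_patch π hfix (dl_not_patch s l y)
  rcases hnp with h | h
  · rw [ct_of_lt _ _ _ h]; omega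
  · rw [ct_of_ge _ _ _ (by omega)]; omega

def delPerm (π : Equiv.Perm (Fin N)) (s : ℕ) (hn : n' + l = N) (hsl : s + l ≤ N)
    (hfix : ∀ u, s ≤ u → u < s + l → appl π u = u) : Equiv.Perm (Fin n') where
  toFun y := ⟨ct s l (appl π (dl s l y.1)), del_bound π hn hsl hfix y.2⟩
  invFun y := ⟨ct s l (appl π⁻¹ (dl s l y.1)),
    del_bound π⁻¹ hn hsl (fun u h1 h2 => appl_inv_fix π (hfix u h1 h2)) y.2⟩
  left_inv y := by
    apply Fin.ext
    show ct s l (appl π⁻¹ (dl s l (ct s l (appl π (dl s l y.1))))) = y.1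
    rw [dl_ct _ _ _ (appl_not_patch π hfix (dl_not_patch s l y.1)),
      appl_appl_inv, ct_dl]
  right_inv y := by
    apply Fin.ext
    show ct s l (appl π (dl s l (ct s l (appl π⁻¹ (dl s l y.1))))) = y.1
    rw [dl_ct _ _ _ (appl_not_patch π⁻¹
        (fun u h1 h2 => appl_inv_fix π (hfix u h1 h2)) (dl_not_patch s l y.1)),
      appl_inv_appl, ct_dl]

theorem appl_delPerm (π : Equiv.Perm (Fin N)) (hn : n' + l = N) (hsl : s + l ≤ N)
    (hfix : ∀ u, s ≤ u → u < s + l → appl π u = u) {y : ℕ} (hy : y < n') :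
    appl (delPerm π s hn hsl hfix) y = ct s l (appl π (dl s l y)) := by
  rw [appl, dif_pos hy]; rfl

theorem ins_bound (σ : Equiv.Perm (Fin n')) (hn : n' + l = N) (hs : s ≤ n')
    {x : ℕ} (hx : x < N) (hnp : x < s ∨ s + l ≤ x) :
    dl s l (appl σ (ct s l x)) < N := by
  have hc : ct s l x < n' := by
    rcases hnp with h | h
    · rw [ct_of_lt _ _ _ h]; omega
    · rw [ct_of_ge _ _ _ (by omega)]; omega
  have hv := appl_lt_s10 σ hc
  have := dl_le s l (appl σ (ct s l x))
  omega

def insPerm (σ : Equiv.Perm (Fin n')) (s : ℕ) (hn : n' + l = N) (hs : s ≤ n') :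
    Equiv.Perm (Fin N) where
  toFun x := if h : s ≤ x.1 ∧ x.1 < s + l then ⟨x.1, x.2⟩
    else ⟨dl s l (appl σ (ct s l x.1)), ins_bound σ hn hs x.2 (by omega)⟩
  invFun x := if h : s ≤ x.1 ∧ x.1 < s + l then ⟨x.1, x.2⟩
    else ⟨dl s l (appl σ⁻¹ (ct s l x.1)), ins_bound σ⁻¹ hn hs x.2 (by omega)⟩
  left_inv x := by
    by_cases h : s ≤ x.1 ∧ x.1 < s + l
    · simp only [dif_pos h]
    · simp only [dif_neg h]
      have hnp := dl_not_patch s l (appl σ (ct s l x.1))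
      rw [dif_neg (show ¬ (s ≤ dl s l (appl σ (ct s l x.1)) ∧
          dl s l (appl σ (ct s l x.1)) < s + l) by omega)]
      apply Fin.ext
      show dl s l (appl σ⁻¹ (ct s l (dl s l (appl σ (ct s l x.1))))) = x.1
      rw [ct_dl, appl_appl_inv, dl_ct _ _ _ (by omega)]
  right_inv x := by
    by_cases h : s ≤ x.1 ∧ x.1 < s + l
    · simp only [dif_pos h]
    · simp only [dif_neg h]
      have hnp := dl_not_patch s l (appl σ⁻¹ (ct s l x.1))
      rw [dif_neg (show ¬ (s ≤ dl s l (appl σ⁻¹ (ct s l x.1)) ∧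
          dl s l (appl σ⁻¹ (ct s l x.1)) < s + l) by omega)]
      apply Fin.ext
      show dl s l (appl σ (ct s l (dl s l (appl σ⁻¹ (ct s l x.1))))) = x.1
      rw [ct_dl, appl_inv_appl, dl_ct _ _ _ (by omega)]

theorem appl_insPerm (σ : Equiv.Perm (Fin n')) (hn : n' + l = N) (hs : s ≤ n')
    {x : ℕ} (hx : x < N) :
    appl (insPerm σ s hn hs) x =
      if s ≤ x ∧ x < s + l then x else dl s l (appl σ (ct s l x)) := by
  rw [appl, dif_pos hx]
  by_cases h : s ≤ x ∧ x < s + l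
  · rw [if_pos h]
    show ((dite _ _ _ : Fin N) : ℕ) = x
    rw [dif_pos h]
  · rw [if_neg h]
    show ((dite _ _ _ : Fin N) : ℕ) = _
    rw [dif_neg h]

end DelIns

theorem ct_ge (s l x : ℕ) : x - l ≤ ct s l x := by unfold ct; split <;> omega

/-! ### deletion preserves the structure -/

section Del

variable {k : ℕ} {a : Fin k → ℕ} {S : Finset (Fin k)} {i : Fin k} {l p : ℕ}
  {π : Equiv.Perm (Fin (∑ t, a t))}

theorem del_isASPerm (hi : i ∉ S) (hl : 1 ≤ l) (hlp : l ≤ p) (hpa : p ≤ a i)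
    (hπ : IsASPerm a S π) (hp : fixInBlock a i π = p)
    (hn : (∑ t, Function.update a i (a i - l) t) + l = ∑ t, a t)
    (hsl : sIdx a i π + l ≤ ∑ t, a t)
    (hfix : ∀ u, sIdx a i π ≤ u → u < sIdx a i π + l → appl π u = u) :
    IsASPerm (Function.update a i (a i - l)) S (delPerm π (sIdx a i π) hn hsl hfix) := by
  have hla : l ≤ a i := hlp.trans hpa
  have hBs : blockStart a i ≤ sIdx a i π := bs_le_sIdx
  have hsp : sIdx a i π + p ≤ blockStart a i + a i := by
    have := sIdx_add_fix_le hπ hi; omega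
  have hBaN : blockStart a i + a i ≤ ∑ t, a t := bs_add_le_sum a i
  intro j y hy1 hy2
  have hyN : y + 1 < ∑ t, Function.update a i (a i - l) t :=
    lt_of_lt_of_le hy2 (bs_add_le_sum _ j)
  rw [appl_delPerm π hn hsl hfix (by omega), appl_delPerm π hn hsl hfix (by omega)]
  rcases lt_trichotomy j i with hji | hji | hij
  · -- block before i
    have h1 : blockStart (Function.update a i (a i - l)) j = blockStart a j :=
      bs_update_le a _ (le_of_lt hji)
    have h2 : Function.update a i (a i - l) j = a j :=
      Function.update_of_ne (ne_of_lt hji) _ a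
    rw [h1] at hy1
    rw [h1, h2] at hy2
    have h3 : blockStart a j + a j ≤ blockStart a i := bs_add_le a hji
    rw [dl_of_lt _ _ _ (by omega), dl_of_lt _ _ _ (by omega)]
    have hold := hπ j y hy1 hy2
    have np1 := appl_not_patch π hfix (x := y) (Or.inl (by omega))
    have np2 := appl_not_patch π hfix (x := y + 1) (Or.inl (by omega))
    by_cases hjS : j ∈ S
    · rw [if_pos hjS] at hold ⊢
      exact ct_lt_ct _ l hold np2 np1
    · rw [if_neg hjS] at hold ⊢
      exact ct_lt_ct _ l hold np1 np2
  · -- block i itself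
    rw [hji] at hy1 hy2 ⊢
    have h1 : blockStart (Function.update a i (a i - l)) i = blockStart a i :=
      bs_update_le a _ le_rfl
    have h2 : Function.update a i (a i - l) i = a i - l :=
      Function.update_self i (a i - l) a
    rw [h1] at hy1
    rw [h1, h2] at hy2
    have hd1 : blockStart a i ≤ dl (sIdx a i π) l y := le_trans hy1 (le_dl _ l y)
    have hd2 : dl (sIdx a i π) l (y + 1) < blockStart a i + a i := by
      have := dl_le (sIdx a i π) l (y + 1); omega
    have hdlt : dl (sIdx a i π) l y < dl (sIdx a i π) l (y + 1) := dl_lt_dl _ l (by omega)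
    have hold := asc_lt hπ hi hd1 hd2 hdlt
    have np1 := appl_not_patch π hfix (dl_not_patch _ l y)
    have np2 := appl_not_patch π hfix (dl_not_patch _ l (y + 1))
    rw [if_neg hi]
    exact ct_lt_ct _ l hold np1 np2
  · -- block after i
    have h1 : blockStart (Function.update a i (a i - l)) j + l = blockStart a j :=
      bs_update_gt a hla hij
    have h2 : Function.update a i (a i - l) j = a j :=
      Function.update_of_ne (ne_of_gt hij) _ a
    rw [h2] at hy2
    have h3 : blockStart a i + a i ≤ blockStart a j := bs_add_le a hij
    rw [dl_of_ge _ _ _ (by omega), dl_of_ge _ _ _ (by omega)]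
    have hold := hπ j (y + l) (by omega) (by omega)
    rw [show y + 1 + l = y + l + 1 by omega]
    have np1 := appl_not_patch π hfix (x := y + l) (Or.inr (by omega))
    have np2 := appl_not_patch π hfix (x := y + l + 1) (Or.inr (by omega))
    by_cases hjS : j ∈ S
    · rw [if_pos hjS] at hold ⊢
      exact ct_lt_ct _ l hold np2 np1
    · rw [if_neg hjS] at hold ⊢
      exact ct_lt_ct _ l hold np1 np2

theorem del_fix (hi : i ∉ S) (hl : 1 ≤ l) (hlp : l ≤ p) (hpa : p ≤ a i)
    (hπ : IsASPerm a S π) (hp : fixInBlock a i π = p)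
    (hn : (∑ t, Function.update a i (a i - l) t) + l = ∑ t, a t)
    (hsl : sIdx a i π + l ≤ ∑ t, a t)
    (hfix : ∀ u, sIdx a i π ≤ u → u < sIdx a i π + l → appl π u = u) :
    fixInBlock (Function.update a i (a i - l)) i (delPerm π (sIdx a i π) hn hsl hfix) =
      p - l := by
  have hla : l ≤ a i := hlp.trans hpa
  have hBs : blockStart a i ≤ sIdx a i π := bs_le_sIdx
  have hsp : sIdx a i π + p ≤ blockStart a i + a i := by
    have := sIdx_add_fix_le hπ hi; omega
  have hBaN : blockStart a i + a i ≤ ∑ t, a t := bs_add_le_sum a i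
  have h1 : blockStart (Function.update a i (a i - l)) i = blockStart a i :=
    bs_update_le a _ le_rfl
  have h2 : Function.update a i (a i - l) i = a i - l :=
    Function.update_self i (a i - l) a
  rw [fixInBlock_eq_card]
  have hset : fixF (Function.update a i (a i - l)) i (delPerm π (sIdx a i π) hn hsl hfix) =
      Finset.Ico (sIdx a i π) (sIdx a i π + (p - l)) := by
    apply Finset.ext
    intro z
    rw [mem_fixF, Finset.mem_Ico]
    constructor
    · rintro ⟨hzb, hzfix⟩
      rw [inBlock, h1, h2] at hzb
      rw [appl_delPerm π hn hsl hfix (by omega)] at hzfix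
      constructor
      · by_contra hc
        rw [dl_of_lt _ _ _ (by omega)] at hzfix
        have hlow := sIdx_low (π := π) (show inBlock a i z by rw [inBlock]; omega)
          (show z < sIdx a i π by omega)
        have := ct_le (sIdx a i π) l (appl π z)
        omega
      · by_contra hc
        push_neg at hc
        have hzs : sIdx a i π ≤ z := by omega
        rw [dl_of_ge _ _ _ hzs] at hzfix
        have hhigh := sIdx_strict_high hπ hi (x := z + l)
          (show inBlock a i (z + l) by rw [inBlock]; omega) (by omega)
        have := ct_ge (sIdx a i π) l (appl π (z + l))
        omega
    · rintro ⟨hz1, hz2⟩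
      constructor
      · rw [inBlock, h1, h2]; omega
      · rw [appl_delPerm π hn hsl hfix (by omega), dl_of_ge _ _ _ hz1]
        rw [fix_of_mem hπ hi (by omega) (by omega)]
        rw [ct_of_ge _ _ _ (by omega)]
        omega
  rw [hset, Nat.card_Ico]
  omega

theorem sIdx_del (hi : i ∉ S) (hl : 1 ≤ l) (hlp : l ≤ p) (hpa : p ≤ a i)
    (hπ : IsASPerm a S π) (hp : fixInBlock a i π = p)
    (hn : (∑ t, Function.update a i (a i - l) t) + l = ∑ t, a t)
    (hsl : sIdx a i π + l ≤ ∑ t, a t)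
    (hfix : ∀ u, sIdx a i π ≤ u → u < sIdx a i π + l → appl π u = u) :
    sIdx (Function.update a i (a i - l)) i (delPerm π (sIdx a i π) hn hsl hfix) =
      sIdx a i π := by
  have hla : l ≤ a i := hlp.trans hpa
  have hBs : blockStart a i ≤ sIdx a i π := bs_le_sIdx
  have hsp : sIdx a i π + p ≤ blockStart a i + a i := by
    have := sIdx_add_fix_le hπ hi; omega
  have hBaN : blockStart a i + a i ≤ ∑ t, a t := bs_add_le_sum a i
  have h1 : blockStart (Function.update a i (a i - l)) i = blockStart a i :=
    bs_update_le a _ le_rfl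
  have h2 : Function.update a i (a i - l) i = a i - l :=
    Function.update_self i (a i - l) a
  apply le_antisymm
  · -- sIdx of the new perm ≤ old s, since old s is a member of the defining set
    apply Nat.sInf_le
    rcases eq_or_lt_of_le (show sIdx a i π ≤ blockStart a i + (a i - l) by omega)
      with heq | hlt
    · right
      rw [Set.mem_singleton_iff, h1, h2, heq]
    · left
      refine ⟨by rw [inBlock, h1, h2]; omega, ?_⟩
      rw [appl_delPerm π hn hsl hfix (by omega), dl_of_ge _ _ _ le_rfl]
      rcases lt_or_ge l p with hltp | hgep
      · rw [fix_of_mem hπ hi (by omega) (by omega), ct_of_ge _ _ _ (by omega)]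
        omega
      · have hhigh := sIdx_strict_high hπ hi (x := sIdx a i π + l)
          (show inBlock a i (sIdx a i π + l) by rw [inBlock]; omega) (by omega)
        have := ct_ge (sIdx a i π) l (appl π (sIdx a i π + l))
        omega
  · -- old s ≤ every member
    apply le_csInf sIdx_nonempty
    rintro b (⟨hbb, hble⟩ | hb)
    · by_contra hc
      push_neg at hc
      rw [inBlock, h1, h2] at hbb
      rw [appl_delPerm π hn hsl hfix (by omega), dl_of_lt _ _ _ hc] at hble
      have hlow := sIdx_low (π := π) (show inBlock a i b by rw [inBlock]; omega) hc
      have := ct_le (sIdx a i π) l (appl π b)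
      omega
    · rw [Set.mem_singleton_iff] at hb
      rw [hb, h1, h2]
      omega

end Del

/-! ### insertion preserves the structure -/

section Ins

variable {k : ℕ} {a : Fin k → ℕ} {S : Finset (Fin k)} {i : Fin k} {l p : ℕ}
  {σ : Equiv.Perm (Fin (∑ t, Function.update a i (a i - l) t))}

theorem ins_isASPerm (hi : i ∉ S) (hl : 1 ≤ l) (hlp : l ≤ p) (hpa : p ≤ a i)
    (hσ : IsASPerm (Function.update a i (a i - l)) S σ)
    (hq : fixInBlock (Function.update a i (a i - l)) i σ = p - l)
    (hn : (∑ t, Function.update a i (a i - l) t) + l = ∑ t, a t)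
    (hs : sIdx (Function.update a i (a i - l)) i σ ≤ ∑ t, Function.update a i (a i - l) t) :
    IsASPerm a S (insPerm σ (sIdx (Function.update a i (a i - l)) i σ) hn hs) := by
  set s' := sIdx (Function.update a i (a i - l)) i σ with hs'
  have hla : l ≤ a i := hlp.trans hpa
  have h1 : blockStart (Function.update a i (a i - l)) i = blockStart a i :=
    bs_update_le a _ le_rfl
  have h2 : Function.update a i (a i - l) i = a i - l :=
    Function.update_self i (a i - l) a
  have hBs : blockStart a i ≤ s' := h1 ▸ bs_le_sIdx
  have hsp : s' + (p - l) ≤ blockStart a i + (a i - l) := by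
    have := sIdx_add_fix_le hσ hi
    rw [h1, h2, hq] at this
    omega
  have hBaN : blockStart a i + a i ≤ ∑ t, a t := bs_add_le_sum a i
  intro j y hy1 hy2
  have hyN : y + 1 < ∑ t, a t := lt_of_lt_of_le hy2 (bs_add_le_sum _ j)
  rw [appl_insPerm σ hn hs (by omega), appl_insPerm σ hn hs (by omega)]
  rcases lt_trichotomy j i with hji | hji | hij
  · -- block before i
    have g1 : blockStart (Function.update a i (a i - l)) j = blockStart a j :=
      bs_update_le a _ (le_of_lt hji)
    have g2 : Function.update a i (a i - l) j = a j :=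
      Function.update_of_ne (ne_of_lt hji) _ a
    have h3 : blockStart a j + a j ≤ blockStart a i := bs_add_le a hji
    have hold := hσ j y (by rw [g1]; omega) (by rw [g1, g2]; omega)
    by_cases hjS : j ∈ S
    · rw [if_pos hjS] at hold ⊢
      rw [if_neg (show ¬ (s' ≤ y ∧ y < s' + l) by omega),
        if_neg (show ¬ (s' ≤ y + 1 ∧ y + 1 < s' + l) by omega),
        ct_of_lt _ _ _ (by omega), ct_of_lt _ _ _ (by omega)]
      exact dl_lt_dl _ l hold
    · rw [if_neg hjS] at hold ⊢
      rw [if_neg (show ¬ (s' ≤ y ∧ y < s' + l) by omega),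
        if_neg (show ¬ (s' ≤ y + 1 ∧ y + 1 < s' + l) by omega),
        ct_of_lt _ _ _ (by omega), ct_of_lt _ _ _ (by omega)]
      exact dl_lt_dl _ l hold
  · -- block i itself
    rw [hji] at hy1 hy2 ⊢
    rw [if_neg hi]
    by_cases hc1 : y + 1 < s'
    · rw [if_neg (show ¬ (s' ≤ y ∧ y < s' + l) by omega),
        if_neg (show ¬ (s' ≤ y + 1 ∧ y + 1 < s' + l) by omega),
        ct_of_lt _ _ _ (by omega), ct_of_lt _ _ _ (by omega)]
      have hold := hσ i y (by rw [h1]; omega) (by rw [h1, h2]; omega)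
      rw [if_neg hi] at hold
      exact dl_lt_dl _ l hold
    · by_cases hc2 : y + 1 = s'
      · rw [if_neg (show ¬ (s' ≤ y ∧ y < s' + l) by omega),
          if_pos (show s' ≤ y + 1 ∧ y + 1 < s' + l by omega), ct_of_lt _ _ _ (by omega)]
        have hlow := sIdx_low (π := σ) (show inBlock (Function.update a i (a i - l)) i y by
          rw [inBlock, h1, h2]; omega) (by omega)
        rw [dl_of_lt _ _ _ (by omega)]
        omega
      · by_cases hc3 : y + 1 < s' + l
        · rw [if_pos (show s' ≤ y ∧ y < s' + l by omega),
            if_pos (show s' ≤ y + 1 ∧ y + 1 < s' + l by omega)]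
          omega
        · by_cases hc4 : y + 1 = s' + l
          · rw [if_pos (show s' ≤ y ∧ y < s' + l by omega),
              if_neg (show ¬ (s' ≤ y + 1 ∧ y + 1 < s' + l) by omega),
              ct_of_ge _ _ _ (by omega)]
            have hhigh := sIdx_high hσ hi (x := y + 1 - l)
              (by rw [inBlock, h1, h2]; omega) (by omega)
            rw [dl_of_ge _ _ _ (by omega)]
            omega
          · rw [if_neg (show ¬ (s' ≤ y ∧ y < s' + l) by omega),
              if_neg (show ¬ (s' ≤ y + 1 ∧ y + 1 < s' + l) by omega),
              ct_of_ge _ _ _ (by omega), ct_of_ge _ _ _ (by omega)]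
            have hold := hσ i (y - l) (by rw [h1]; omega) (by rw [h1, h2]; omega)
            rw [if_neg hi] at hold
            rw [show y + 1 - l = y - l + 1 by omega]
            exact dl_lt_dl _ l hold
  · -- block after i
    have g1 : blockStart (Function.update a i (a i - l)) j + l = blockStart a j :=
      bs_update_gt a hla hij
    have g2 : Function.update a i (a i - l) j = a j :=
      Function.update_of_ne (ne_of_gt hij) _ a
    have h3 : blockStart a i + a i ≤ blockStart a j := bs_add_le a hij
    have hold := hσ j (y - l) (by omega) (by rw [g2]; omega)
    by_cases hjS : j ∈ S
    · rw [if_pos hjS] at hold ⊢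
      rw [if_neg (show ¬ (s' ≤ y ∧ y < s' + l) by omega),
        if_neg (show ¬ (s' ≤ y + 1 ∧ y + 1 < s' + l) by omega),
        ct_of_ge _ _ _ (by omega), ct_of_ge _ _ _ (by omega),
        show y + 1 - l = y - l + 1 by omega]
      exact dl_lt_dl _ l hold
    · rw [if_neg hjS] at hold ⊢
      rw [if_neg (show ¬ (s' ≤ y ∧ y < s' + l) by omega),
        if_neg (show ¬ (s' ≤ y + 1 ∧ y + 1 < s' + l) by omega),
        ct_of_ge _ _ _ (by omega), ct_of_ge _ _ _ (by omega),
        show y + 1 - l = y - l + 1 by omega]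
      exact dl_lt_dl _ l hold

theorem ins_fix (hi : i ∉ S) (hl : 1 ≤ l) (hlp : l ≤ p) (hpa : p ≤ a i)
    (hσ : IsASPerm (Function.update a i (a i - l)) S σ)
    (hq : fixInBlock (Function.update a i (a i - l)) i σ = p - l)
    (hn : (∑ t, Function.update a i (a i - l) t) + l = ∑ t, a t)
    (hs : sIdx (Function.update a i (a i - l)) i σ ≤ ∑ t, Function.update a i (a i - l) t) :
    fixInBlock a i (insPerm σ (sIdx (Function.update a i (a i - l)) i σ) hn hs) = p := by
  set s' := sIdx (Function.update a i (a i - l)) i σ with hs'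
  have hla : l ≤ a i := hlp.trans hpa
  have h1 : blockStart (Function.update a i (a i - l)) i = blockStart a i :=
    bs_update_le a _ le_rfl
  have h2 : Function.update a i (a i - l) i = a i - l :=
    Function.update_self i (a i - l) a
  have hBs : blockStart a i ≤ s' := h1 ▸ bs_le_sIdx
  have hsp : s' + (p - l) ≤ blockStart a i + (a i - l) := by
    have := sIdx_add_fix_le hσ hi
    rw [h1, h2, hq] at this
    omega
  have hBaN : blockStart a i + a i ≤ ∑ t, a t := bs_add_le_sum a i
  rw [fixInBlock_eq_card]
  have hset : fixF a i (insPerm σ s' hn hs) = Finset.Ico s' (s' + p) := by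
    apply Finset.ext
    intro z
    rw [mem_fixF, Finset.mem_Ico, inBlock]
    constructor
    · rintro ⟨hzb, hzfix⟩
      rw [appl_insPerm σ hn hs (by omega)] at hzfix
      constructor
      · by_contra hc
        push_neg at hc
        rw [if_neg (by omega), ct_of_lt _ _ _ (by omega)] at hzfix
        have hlow := sIdx_low (π := σ) (show inBlock (Function.update a i (a i - l)) i z by
          rw [inBlock, h1, h2]; omega) (by omega)
        rw [dl_of_lt _ _ _ (by omega)] at hzfix
        omega
      · by_contra hc
        push_neg at hc
        rw [if_neg (by omega), ct_of_ge _ _ _ (by omega)] at hzfix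
        have hhigh := sIdx_strict_high hσ hi (x := z - l)
          (by rw [inBlock, h1, h2]; omega) (by rw [hq]; omega)
        have hd := le_dl s' l (appl σ (z - l))
        rw [dl_of_ge _ _ _ (by omega)] at hzfix
        omega
    · rintro ⟨hz1, hz2⟩
      have hzb1 : blockStart a i ≤ z := by omega
      have hzb2 : z < blockStart a i + a i := by omega
      refine ⟨⟨hzb1, hzb2⟩, ?_⟩
      rw [appl_insPerm σ hn hs (by omega)]
      by_cases hcz : z < s' + l
      · rw [if_pos (by omega)]
      · rw [if_neg (by omega), ct_of_ge _ _ _ (by omega)]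
        have hfixz : appl σ (z - l) = z - l := by
          apply fix_of_mem hσ hi
          · omega
          · rw [hq]; omega
        rw [hfixz, dl_of_ge _ _ _ (by omega)]
        omega
  rw [hset, Nat.card_Ico]
  omega

theorem sIdx_ins (hi : i ∉ S) (hl : 1 ≤ l) (hlp : l ≤ p) (hpa : p ≤ a i)
    (hσ : IsASPerm (Function.update a i (a i - l)) S σ)
    (hq : fixInBlock (Function.update a i (a i - l)) i σ = p - l)
    (hn : (∑ t, Function.update a i (a i - l) t) + l = ∑ t, a t)
    (hs : sIdx (Function.update a i (a i - l)) i σ ≤ ∑ t, Function.update a i (a i - l) t) :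
    sIdx a i (insPerm σ (sIdx (Function.update a i (a i - l)) i σ) hn hs) =
      sIdx (Function.update a i (a i - l)) i σ := by
  set s' := sIdx (Function.update a i (a i - l)) i σ with hs'
  have hla : l ≤ a i := hlp.trans hpa
  have h1 : blockStart (Function.update a i (a i - l)) i = blockStart a i :=
    bs_update_le a _ le_rfl
  have h2 : Function.update a i (a i - l) i = a i - l :=
    Function.update_self i (a i - l) a
  have hBs : blockStart a i ≤ s' := h1 ▸ bs_le_sIdx
  have hsp : s' + (p - l) ≤ blockStart a i + (a i - l) := by
    have := sIdx_add_fix_le hσ hi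
    rw [h1, h2, hq] at this
    omega
  have hs'B : s' ≤ blockStart a i + (a i - l) := by
    have := sIdx_le (a := Function.update a i (a i - l)) (i := i) (π := σ)
    rw [h1, h2] at this
    exact this
  have hBaN : blockStart a i + a i ≤ ∑ t, a t := bs_add_le_sum a i
  apply le_antisymm
  · apply Nat.sInf_le
    left
    refine ⟨by rw [inBlock]; omega, ?_⟩
    rw [appl_insPerm σ hn hs (by omega), if_pos (by omega)]
  · apply le_csInf sIdx_nonempty
    rintro b (⟨hbb, hble⟩ | hb)
    · by_contra hc
      push_neg at hc
      rw [inBlock] at hbb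
      rw [appl_insPerm σ hn hs (by omega), if_neg (by omega),
        ct_of_lt _ _ _ (by omega)] at hble
      have hlow := sIdx_low (π := σ) (show inBlock (Function.update a i (a i - l)) i b by
        rw [inBlock, h1, h2]; omega) (by omega)
      rw [dl_of_lt _ _ _ (by omega)] at hble
      omega
    · rw [Set.mem_singleton_iff] at hb
      omega

end Ins

/-! ### round trips -/

theorem perm_eq_of_appl {n : ℕ} (τ ρ : Equiv.Perm (Fin n))
    (h : ∀ x, x < n → appl τ x = appl ρ x) : τ = ρ := by
  apply Equiv.ext
  intro x
  apply Fin.ext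
  have hx := h x.1 x.2
  rw [appl, dif_pos x.2, appl, dif_pos x.2] at hx
  exact hx

section RT

variable {k : ℕ} {a : Fin k → ℕ} {S : Finset (Fin k)} {i : Fin k} {l p : ℕ}

theorem ins_del_s10 {π : Equiv.Perm (Fin (∑ t, a t))}
    (hi : i ∉ S) (hl : 1 ≤ l) (hlp : l ≤ p) (hpa : p ≤ a i)
    (hπ : IsASPerm a S π) (hp : fixInBlock a i π = p)
    (hn : (∑ t, Function.update a i (a i - l) t) + l = ∑ t, a t)
    (hsl : sIdx a i π + l ≤ ∑ t, a t)
    (hfix : ∀ u, sIdx a i π ≤ u → u < sIdx a i π + l → appl π u = u)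
    (hs2 : sIdx (Function.update a i (a i - l)) i (delPerm π (sIdx a i π) hn hsl hfix)
      ≤ ∑ t, Function.update a i (a i - l) t) :
    insPerm (delPerm π (sIdx a i π) hn hsl hfix)
      (sIdx (Function.update a i (a i - l)) i (delPerm π (sIdx a i π) hn hsl hfix))
      hn hs2 = π := by
  have hsd := sIdx_del hi hl hlp hpa hπ hp hn hsl hfix
  apply perm_eq_of_appl
  intro x hx
  rw [appl_insPerm _ hn hs2 hx, hsd]
  by_cases hpatch : sIdx a i π ≤ x ∧ x < sIdx a i π + l
  · rw [if_pos hpatch, hfix x hpatch.1 hpatch.2]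
  · rw [if_neg hpatch]
    have hnp : x < sIdx a i π ∨ sIdx a i π + l ≤ x := by
      by_contra hc
      push_neg at hc
      exact hpatch ⟨by omega, by omega⟩
    have hct : ct (sIdx a i π) l x < ∑ t, Function.update a i (a i - l) t := by
      rcases hnp with h | h
      · rw [ct_of_lt _ _ _ h]; omega
      · rw [ct_of_ge _ _ _ (by omega)]; omega
    rw [appl_delPerm π hn hsl hfix hct, dl_ct _ _ _ hnp,
      dl_ct _ _ _ (appl_not_patch π hfix hnp)]

theorem del_ins {σ : Equiv.Perm (Fin (∑ t, Function.update a i (a i - l) t))}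
    (hi : i ∉ S) (hl : 1 ≤ l) (hlp : l ≤ p) (hpa : p ≤ a i)
    (hσ : IsASPerm (Function.update a i (a i - l)) S σ)
    (hq : fixInBlock (Function.update a i (a i - l)) i σ = p - l)
    (hn : (∑ t, Function.update a i (a i - l) t) + l = ∑ t, a t)
    (hs : sIdx (Function.update a i (a i - l)) i σ ≤ ∑ t, Function.update a i (a i - l) t)
    (hsl2 : sIdx a i (insPerm σ (sIdx (Function.update a i (a i - l)) i σ) hn hs) + l
      ≤ ∑ t, a t)
    (hfix2 : ∀ u, sIdx a i (insPerm σ (sIdx (Function.update a i (a i - l)) i σ) hn hs) ≤ u →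
      u < sIdx a i (insPerm σ (sIdx (Function.update a i (a i - l)) i σ) hn hs) + l →
      appl (insPerm σ (sIdx (Function.update a i (a i - l)) i σ) hn hs) u = u) :
    delPerm (insPerm σ (sIdx (Function.update a i (a i - l)) i σ) hn hs)
      (sIdx a i (insPerm σ (sIdx (Function.update a i (a i - l)) i σ) hn hs))
      hn hsl2 hfix2 = σ := by
  have hsi := sIdx_ins hi hl hlp hpa hσ hq hn hs
  apply perm_eq_of_appl
  intro y hy
  rw [appl_delPerm _ hn hsl2 hfix2 hy, hsi]
  set s' := sIdx (Function.update a i (a i - l)) i σ with hs'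
  have hdb : dl s' l y < ∑ t, a t := by
    have := dl_le s' l y; omega
  have hnp := dl_not_patch s' l y
  rw [appl_insPerm σ hn hs hdb,
    if_neg (show ¬ (s' ≤ dl s' l y ∧ dl s' l y < s' + l) by omega),
    ct_dl, ct_dl]

end RT

/-- For `i ∉ S` (an ascending block) and `0 ≤ l ≤ p ≤ aᵢ`, there is a bijection
between `(a₁,…,aᵢ,…,a_k,S)`-permutations with exactly `p` fixed points in `Aᵢ` and
`(a₁,…,aᵢ-l,…,a_k,S)`-permutations with exactly `p - l` fixed points in `Aᵢ`. -/
theorem ascending_block_fixed_point_bijection (k : ℕ) (a : Fin k → ℕ)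
    (S : Finset (Fin k)) (i : Fin k) (hi : i ∉ S) (l p : ℕ) (hlp : l ≤ p)
    (hpa : p ≤ a i) :
    Nonempty
      ({π : Equiv.Perm (Fin (∑ t, a t)) // IsASPerm a S π ∧ fixInBlock a i π = p} ≃
       {π : Equiv.Perm (Fin (∑ t, Function.update a i (a i - l) t)) //
          IsASPerm (Function.update a i (a i - l)) S π ∧
          fixInBlock (Function.update a i (a i - l)) i π = p - l}) := by
  rcases Nat.eq_zero_or_pos l with rfl | hl
  · have hupd : Function.update a i (a i - 0) = a := by
      rw [Nat.sub_zero]; exact Function.update_eq_self i a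
    rw [hupd, Nat.sub_zero]
    exact ⟨Equiv.refl _⟩
  · have hla : l ≤ a i := hlp.trans hpa
    have hn : (∑ t, Function.update a i (a i - l) t) + l = ∑ t, a t := sum_update a i hla
    have hBaN : blockStart a i + a i ≤ ∑ t, a t := bs_add_le_sum a i
    have hsl : ∀ π : Equiv.Perm (Fin (∑ t, a t)), IsASPerm a S π → fixInBlock a i π = p →
        sIdx a i π + l ≤ ∑ t, a t := by
      intro π hπ hp
      have := sIdx_add_fix_le hπ hi
      omega
    have hfix : ∀ (π : Equiv.Perm (Fin (∑ t, a t))), IsASPerm a S π → fixInBlock a i π = p →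
        ∀ u, sIdx a i π ≤ u → u < sIdx a i π + l → appl π u = u := by
      intro π hπ hp u h1 h2
      exact fix_of_mem hπ hi h1 (by omega)
    have hsr : ∀ σ : Equiv.Perm (Fin (∑ t, Function.update a i (a i - l) t)),
        sIdx (Function.update a i (a i - l)) i σ ≤ ∑ t, Function.update a i (a i - l) t := by
      intro σ
      exact le_trans sIdx_le (bs_add_le_sum _ i)
    exact ⟨⟨fun π => ⟨delPerm π.1 (sIdx a i π.1) hn (hsl π.1 π.2.1 π.2.2)
          (hfix π.1 π.2.1 π.2.2),
        del_isASPerm hi hl hlp hpa π.2.1 π.2.2 hn (hsl π.1 π.2.1 π.2.2) (hfix π.1 π.2.1 π.2.2),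
        del_fix hi hl hlp hpa π.2.1 π.2.2 hn (hsl π.1 π.2.1 π.2.2) (hfix π.1 π.2.1 π.2.2)⟩,
      fun σ => ⟨insPerm σ.1 (sIdx (Function.update a i (a i - l)) i σ.1) hn (hsr σ.1),
        ins_isASPerm hi hl hlp hpa σ.2.1 σ.2.2 hn (hsr σ.1),
        ins_fix hi hl hlp hpa σ.2.1 σ.2.2 hn (hsr σ.1)⟩,
      fun π => Subtype.ext (ins_del_s10 hi hl hlp hpa π.2.1 π.2.2 hn (hsl π.1 π.2.1 π.2.2)
        (hfix π.1 π.2.1 π.2.2) (hsr _)),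
      fun σ => Subtype.ext (del_ins hi hl hlp hpa σ.2.1 σ.2.2 hn (hsr σ.1)
        (hsl _ (ins_isASPerm hi hl hlp hpa σ.2.1 σ.2.2 hn (hsr σ.1))
          (ins_fix hi hl hlp hpa σ.2.1 σ.2.2 hn (hsr σ.1)))
        (hfix _ (ins_isASPerm hi hl hlp hpa σ.2.1 σ.2.2 hn (hsr σ.1))
          (ins_fix hi hl hlp hpa σ.2.1 σ.2.2 hn (hsr σ.1))))⟩⟩
end
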